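/- arXiv:1610.08747 — 3 statements merged into one kernel-verified Lean document; each statement's English description precedes it below -/
import Mathlib

section
/- Let Ω be a domain in a complex Banach space. Then the Lempert function l_Ω : Ω × Ω → [0,1) is upper semicontinuous. -/
open Filter Metric Set Topology MeasureTheory

/-- The Lempert function of a domain `Ω` in a complex Banach space. -/
noncomputable def lempert {E : Type*} [NormedAddCommGroup E] [NormedSpace ℂ E]
    (Ω : Set E) (z w : E) : ℝ :=
  sInf {r : ℝ | ∃ (f : ℂ → E) (l : ℂ), DifferentiableOn ℂ f (ball 0 1) ∧
    MapsTo f (ball 0 1) Ω ∧ f 0 = z ∧ f l = w ∧ l ∈ ball (0:ℂ) 1 ∧ r = ‖l‖}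

/-- The Poincaré distance from `0` to a point at "radius" `r`. -/
noncomputable def poincareDist (r : ℝ) : ℝ := (1/2) * Real.log ((1+r)/(1-r))

/-- The Kobayashi pseudo-distance of a domain `Ω`, defined via chains. -/
noncomputable def kobayashi {E : Type*} [NormedAddCommGroup E] [NormedSpace ℂ E]
    (Ω : Set E) (z w : E) : ℝ :=
  sInf {r : ℝ | ∃ (n : ℕ) (c : ℕ → E), c 0 = z ∧ c n = w ∧ (∀ i, i ≤ n → c i ∈ Ω) ∧
    r = ∑ i ∈ Finset.range n, poincareDist (lempert Ω (c i) (c (i+1)))}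

/-- `Ω` is (Kobayashi) hyperbolic: `kobayashi Ω` is a distance defining the norm topology. -/
def IsHyperbolic {E : Type*} [NormedAddCommGroup E] [NormedSpace ℂ E] (Ω : Set E) : Prop :=
  (∀ z ∈ Ω, ∀ w ∈ Ω, kobayashi Ω z w = 0 → z = w) ∧
  (∀ z ∈ Ω, ∀ ε > 0, ∃ δ > 0, ∀ w ∈ Ω, kobayashi Ω z w < δ → ‖w - z‖ < ε) ∧
  (∀ z ∈ Ω, ∀ ε > 0, ∃ δ > 0, ∀ w ∈ Ω, ‖w - z‖ < δ → kobayashi Ω z w < ε)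

/-- A sequence in `Ω` which is Cauchy for the Kobayashi pseudo-distance. -/
def KCauchy {E : Type*} [NormedAddCommGroup E] [NormedSpace ℂ E]
    (Ω : Set E) (x : ℕ → E) : Prop :=
  ∀ ε > 0, ∃ N, ∀ m ≥ N, ∀ n ≥ N, kobayashi Ω (x m) (x n) < ε

/-- `Ω` is complete hyperbolic. -/
def IsCompleteHyperbolic {E : Type*} [NormedAddCommGroup E] [NormedSpace ℂ E]
    (Ω : Set E) : Prop :=
  IsHyperbolic Ω ∧ ∀ x : ℕ → E, (∀ n, x n ∈ Ω) → KCauchy Ω x →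
    ∃ p ∈ Ω, Tendsto x atTop (nhds p)

/-- The filter of neighborhoods of `∞` (traces on `Ω` taken by `⊓ 𝓟 Ω` where needed). -/
noncomputable def atInfFilter (E : Type*) [NormedAddCommGroup E] : Filter E :=
  Filter.comap (fun z : E => ‖z‖) Filter.atTop

/-- The boundary point described by the filter `l` (either `𝓝 a` for `a ∈ ∂Ω`, or the
filter at `∞`) is a `k'`-point of `Ω`: no `k_Ω`-Cauchy sequence of `Ω` converges to it. -/
def KPrimeAt {E : Type*} [NormedAddCommGroup E] [NormedSpace ℂ E]
    (Ω : Set E) (l : Filter E) : Prop :=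
  ¬ ∃ x : ℕ → E, (∀ n, x n ∈ Ω) ∧ KCauchy Ω x ∧ Tendsto x atTop l

/-- A real-valued function is subharmonic on `U ⊆ ℂ`: upper semicontinuous and
satisfying the sub-mean-value inequality on closed disks contained in `U`. -/
def SubharmonicOnR (v : ℂ → ℝ) (U : Set ℂ) : Prop :=
  UpperSemicontinuousOn v U ∧ ∀ c : ℂ, ∀ r : ℝ, 0 < r → closedBall c r ⊆ U →
    v c ≤ (2 * Real.pi)⁻¹ *
      ∫ θ in (0:ℝ)..(2*Real.pi), v (c + (r : ℂ) * Complex.exp (θ * Complex.I))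

/-- Plurisubharmonicity on a domain of a complex Banach space. -/
def PlurisubharmonicOn {E : Type*} [NormedAddCommGroup E] [NormedSpace ℂ E]
    (u : E → ℝ) (Ω : Set E) : Prop :=
  UpperSemicontinuousOn u Ω ∧
    ∀ a b : E, SubharmonicOnR (fun t => u (a + t • b)) {t : ℂ | a + t • b ∈ Ω}


/-- A holomorphic map of the unit disc into a thin neighborhood of `[-1,1]`,
equal to `1` at `0` and to `-1` at some positive real `τ < 1`. -/
lemma psi_disc (η : ℝ) (hη : 0 < η) (hη1 : η ≤ 1) :
    ∃ (ψ : ℂ → ℂ) (τ : ℝ), DifferentiableOn ℂ ψ (ball 0 1) ∧ ψ 0 = 1 ∧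
      0 < τ ∧ τ < 1 ∧ ψ ↑τ = -1 ∧
      ∀ t ∈ ball (0:ℂ) 1, ∃ r : ℝ, r ∈ Icc (-1:ℝ) 1 ∧ ‖ψ t - ↑r‖ ≤ η := by
  have hπ := Real.pi_pos
  set h : ℝ := η / 6 with hh_def
  have hhpos : 0 < h := by positivity
  have hh1 : h ≤ 1/6 := by rw [hh_def]; linarith
  set a : ℝ := 2 * h / Real.pi with ha_def
  have ha : 0 < a := by positivity
  have hah : a * (Real.pi / 2) = h := by rw [ha_def]; field_simp
  set u : ℂ → ℂ := fun t => (1 + t) / (1 - t) with hu_def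
  set ψ : ℂ → ℂ := fun t => Complex.cos (↑a * Complex.log (u t)) with hψ_def
  -- positivity of the real part of u on the ball
  have hmem : ∀ t ∈ ball (0:ℂ) 1, 0 < (u t).re := by
    intro t ht
    rw [mem_ball_zero_iff] at ht
    have hne : (1 : ℂ) - t ≠ 0 := by
      intro h0
      have : t = 1 := by linear_combination -h0
      rw [this] at ht; norm_num at ht
    have hsq : Complex.normSq t < 1 := by
      rw [Complex.normSq_eq_norm_sq]
      have : ‖t‖ < 1 := ht
      nlinarith [norm_nonneg t]
    have hnsq : 0 < Complex.normSq (1 - t) := Complex.normSq_pos.2 hne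
    rw [hu_def]
    simp only [Complex.div_re, Complex.add_re, Complex.one_re, Complex.add_im,
      Complex.one_im, Complex.sub_re, Complex.sub_im]
    rw [Complex.normSq_apply] at hsq
    have hnum : (1 + t.re) * (1 - t.re) / Complex.normSq (1 - t)
        + (0 + t.im) * (0 - t.im) / Complex.normSq (1 - t)
        = (1 - (t.re * t.re + t.im * t.im)) / Complex.normSq (1 - t) := by ring
    rw [hnum]
    exact div_pos (by linarith) hnsq
  -- the imaginary part of a * log (u t) is small
  have him : ∀ t ∈ ball (0:ℂ) 1, |(↑a * Complex.log (u t)).im| ≤ h := by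
    intro t ht
    have harg : |Complex.arg (u t)| < Real.pi / 2 :=
      Complex.abs_arg_lt_pi_div_two_iff.2 (Or.inl (hmem t ht))
    have : (↑a * Complex.log (u t)).im = a * Complex.arg (u t) := by
      simp [Complex.mul_im, Complex.log_im]
    rw [this, abs_mul, abs_of_pos ha]
    calc a * |Complex.arg (u t)| ≤ a * (Real.pi / 2) := by nlinarith
      _ = h := hah
  refine ⟨ψ, ?_⟩
  -- the point τ
  set β : ℝ := Real.pi / a with hβ_def
  have hβ : 0 < β := by positivity
  set Eβ : ℝ := Real.exp β with hE_def
  have hE1 : 1 < Eβ := Real.one_lt_exp_iff.2 hβ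
  set τ : ℝ := (Eβ - 1) / (Eβ + 1) with hτ_def
  have hτpos : 0 < τ := by apply div_pos <;> linarith
  have hτ1 : τ < 1 := by rw [hτ_def, div_lt_one (by linarith)]; linarith
  have hEβ0 : (0:ℝ) < Eβ := by linarith
  refine ⟨τ, ?_, ?_, hτpos, hτ1, ?_, ?_⟩
  · -- differentiability
    intro t ht
    have ht' := mem_ball_zero_iff.1 ht
    have hne : (1 : ℂ) - t ≠ 0 := by
      intro h0
      have : t = 1 := by linear_combination -h0
      rw [this] at ht'; norm_num at ht'
    have hu' : DifferentiableAt ℂ u t := by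
      rw [hu_def]
      exact DifferentiableAt.div (by fun_prop) (by fun_prop) hne
    have hslit : u t ∈ Complex.slitPlane := Complex.mem_slitPlane_iff.2 (Or.inl (hmem t ht))
    exact (((hu'.clog hslit).const_mul (a:ℂ)).ccos).differentiableWithinAt
  · -- value at 0
    show Complex.cos (↑a * Complex.log (u 0)) = 1
    have : u 0 = 1 := by rw [hu_def]; norm_num
    rw [this]
    simp [Complex.log_one]
  · -- value at τ
    have h1τ : (1:ℝ) - τ ≠ 0 := by intro h0; linarith [(by linarith : (0:ℝ) < 1 - τ)]
    have huτ : u ↑τ = (Eβ : ℂ) := by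
      show ((1:ℂ) + ↑τ) / (1 - ↑τ) = (Eβ : ℂ)
      have key : ((1:ℝ) + τ) / ((1:ℝ) - τ) = Eβ := by
        rw [div_eq_iff h1τ, hτ_def]
        field_simp
        ring
      rw [show ((1:ℂ) + ↑τ) / (1 - ↑τ) = ↑(((1:ℝ) + τ) / ((1:ℝ) - τ)) by push_cast; ring]
      rw [key]
    show Complex.cos (↑a * Complex.log (u ↑τ)) = -1
    rw [huτ]
    rw [← Complex.ofReal_log hEβ0.le]
    rw [hE_def, Real.log_exp]
    rw [show (↑a * ↑β : ℂ) = ↑(a * β) by push_cast; ring]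
    rw [show a * β = Real.pi by rw [hβ_def]; field_simp]
    rw [← Complex.ofReal_cos, Real.cos_pi]
    norm_num
  · -- the approximation bound
    intro t ht
    set L : ℂ := ↑a * Complex.log (u t) with hL
    have hyb : |L.im| ≤ h := him t ht
    have hre : (Complex.cos L).re = Real.cos L.re * Real.cosh L.im := by
      rw [Complex.cos_eq]
      simp [← Complex.ofReal_cos, ← Complex.ofReal_sin, ← Complex.ofReal_cosh,
        ← Complex.ofReal_sinh]
    have himψ : (Complex.cos L).im = -(Real.sin L.re * Real.sinh L.im) := by
      rw [Complex.cos_eq]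
      simp [← Complex.ofReal_cos, ← Complex.ofReal_sin, ← Complex.ofReal_cosh,
        ← Complex.ofReal_sinh]
    set R : ℝ := Real.cos L.re * Real.cosh L.im with hR
    set r : ℝ := max (-1) (min 1 R) with hr
    have hch : Real.cosh L.im ≤ Real.cosh h := by
      rw [← Real.cosh_abs L.im]
      exact Real.cosh_le_cosh.2 (by rw [abs_abs]; exact le_trans hyb (le_abs_self h))
    have h1c : 1 ≤ Real.cosh h := Real.one_le_cosh h
    have hsinh3 : Real.sinh h ≤ 3 * h := by
      have h1 : Real.exp h ≤ 3 := by
        have := Real.exp_one_lt_d9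
        calc Real.exp h ≤ Real.exp 1 := Real.exp_le_exp.2 (by linarith)
          _ ≤ 3 := by linarith
      have h2 : 1 - 2*h ≤ Real.exp (-(2*h)) := by
        have := Real.add_one_le_exp (-(2*h)); linarith
      have h4 : Real.exp (-h) * Real.exp h = 1 := by rw [← Real.exp_add]; norm_num
      have h5 : Real.exp (-h) * Real.exp (-h) = Real.exp (-(2*h)) := by
        rw [← Real.exp_add]; ring_nf
      rw [Real.sinh_eq]
      nlinarith [Real.exp_pos h, Real.exp_pos (-h)]
    have hcs : Real.cosh h - 1 ≤ Real.sinh h := by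
      have := Real.cosh_sub_sinh h
      have h6 : Real.exp (-h) ≤ 1 := by
        rw [← Real.exp_zero]; exact Real.exp_le_exp.2 (by linarith)
      linarith
    have hrIcc : r ∈ Icc (-1:ℝ) 1 := by
      constructor
      · exact le_max_left _ _
      · rw [hr]; exact max_le (by norm_num) (min_le_left _ _)
    have hRabs : |R| ≤ Real.cosh L.im := by
      rw [hR, abs_mul, abs_of_pos (Real.cosh_pos _)]
      nlinarith [Real.abs_cos_le_one L.re, Real.cosh_pos (x := L.im)]
    have hRr : |R - r| ≤ Real.cosh h - 1 := by
      rcases le_total R 1 with hR1 | hR1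
      · rcases le_total (-1) R with hR2 | hR2
        · have hrR : r = R := by rw [hr, min_eq_right hR1, max_eq_right hR2]
          rw [hrR, sub_self, abs_zero]; linarith
        · have hrR : r = -1 := by rw [hr, min_eq_right hR1, max_eq_left hR2]
          rw [hrR, abs_of_nonpos (by linarith)]
          have : -R ≤ Real.cosh h := le_trans (neg_le_abs R) (le_trans hRabs hch)
          linarith
      · have hrR : r = 1 := by rw [hr, min_eq_left hR1, max_eq_right (by norm_num : (-1:ℝ) ≤ 1)]
        rw [hrR, abs_of_nonneg (by linarith)]
        have : R ≤ Real.cosh h := le_trans (le_abs_self R) (le_trans hRabs hch)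
        linarith
    refine ⟨r, hrIcc, ?_⟩
    have habs : ‖ψ t - ↑r‖ ≤ |(ψ t - (↑r:ℂ)).re| + |(ψ t - (↑r:ℂ)).im| := by
      exact Complex.norm_le_abs_re_add_abs_im _
    have hre' : (ψ t - (↑r:ℂ)).re = R - r := by
      rw [show ψ t = Complex.cos L from rfl]; simp [hre, hR]
    have him' : (ψ t - (↑r:ℂ)).im = -(Real.sin L.re * Real.sinh L.im) := by
      rw [show ψ t = Complex.cos L from rfl]; simp [himψ]
    have hsin : |(ψ t - (↑r:ℂ)).im| ≤ Real.sinh h := by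
      rw [him', abs_neg, abs_mul]
      have hs1 : |Real.sin L.re| ≤ 1 := abs_le.2 ⟨Real.neg_one_le_sin _, Real.sin_le_one _⟩
      have hs2 : |Real.sinh L.im| ≤ Real.sinh h := by
        rw [Real.abs_sinh]; exact Real.sinh_le_sinh.2 hyb
      calc |Real.sin L.re| * |Real.sinh L.im|
          ≤ 1 * |Real.sinh L.im| := mul_le_mul_of_nonneg_right hs1 (abs_nonneg _)
        _ = |Real.sinh L.im| := one_mul _
        _ ≤ Real.sinh h := hs2
    calc ‖ψ t - ↑r‖ ≤ |(ψ t - (↑r:ℂ)).re| + |(ψ t - (↑r:ℂ)).im| := habs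
      _ ≤ (Real.cosh h - 1) + Real.sinh h := by rw [hre']; exact add_le_add hRr hsin
      _ ≤ 2 * Real.sinh h := by linarith
      _ ≤ 6 * h := by linarith
      _ = η := by rw [hh_def]; ring

/-- In an open preconnected set, any two points are joined by a polygonal chain. -/
lemma exists_chain {E : Type*} [NormedAddCommGroup E] [NormedSpace ℂ E]
    {Ω : Set E} (hΩo : IsOpen Ω) (hΩc : IsPreconnected Ω) {z w : E}
    (hz : z ∈ Ω) (hw : w ∈ Ω) :
    ∃ (m : ℕ) (p : ℕ → E), p 0 = z ∧ p m = w ∧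
      ∀ i < m, segment ℝ (p i) (p (i + 1)) ⊆ Ω := by
  set A : Set E := {v | v ∈ Ω ∧ ∃ (m : ℕ) (p : ℕ → E), p 0 = z ∧ p m = v ∧
      ∀ i < m, segment ℝ (p i) (p (i + 1)) ⊆ Ω} with hA
  have hzA : z ∈ A := ⟨hz, 0, fun _ => z, rfl, rfl, fun i hi => absurd hi (Nat.not_lt_zero i)⟩
  have extend : ∀ v ∈ A, ∀ ρ > (0:ℝ), ball v ρ ⊆ Ω → ball v ρ ⊆ A := by
    intro v hv ρ hρ hball x hx
    obtain ⟨hvΩ, m, p, hp0, hpm, hseg⟩ := hv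
    refine ⟨hball hx, m + 1, fun i => if i ≤ m then p i else x, ?_, ?_, ?_⟩
    · simp only [Nat.zero_le, if_pos]; exact hp0
    · simp only [if_neg (by omega : ¬ m + 1 ≤ m)]
    · intro i hi
      show segment ℝ (if i ≤ m then p i else x) (if i + 1 ≤ m then p (i + 1) else x) ⊆ Ω
      rcases Nat.lt_or_ge i m with him | him
      · have h1 : (if i ≤ m then p i else x) = p i := if_pos (le_of_lt him)
        have h2 : (if i + 1 ≤ m then p (i + 1) else x) = p (i + 1) := if_pos him
        rw [h1, h2]; exact hseg i him
      · have hieq : i = m := by omega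
        rw [hieq]
        have h1 : (if m ≤ m then p m else x) = v := by rw [if_pos le_rfl, hpm]
        have h2 : (if m + 1 ≤ m then p (m + 1) else x) = x := if_neg (by omega)
        rw [h1, h2]
        exact fun y hy =>
          hball ((convex_ball v ρ).segment_subset (mem_ball_self hρ) hx hy)
  by_cases hwA : w ∈ A
  · exact hwA.2
  · exfalso
    set B : Set E := {v | v ∈ Ω ∧ v ∉ A} with hB
    have hAopen : IsOpen A := by
      rw [Metric.isOpen_iff]
      intro v hv
      obtain ⟨ρ, hρ, hball⟩ := Metric.isOpen_iff.1 hΩo v hv.1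
      exact ⟨ρ, hρ, extend v hv ρ hρ hball⟩
    have hBopen : IsOpen B := by
      rw [Metric.isOpen_iff]
      intro v hv
      obtain ⟨ρ, hρ, hball⟩ := Metric.isOpen_iff.1 hΩo v hv.1
      refine ⟨ρ/2, by linarith, fun x hx =>
        ⟨hball (ball_subset_ball (by linarith) hx), fun hxA => hv.2 ?_⟩⟩
      have hsub : ball x (ρ/2) ⊆ Ω := by
        intro y hy
        apply hball
        rw [mem_ball]
        calc dist y v ≤ dist y x + dist x v := dist_triangle _ _ _
          _ < ρ/2 + ρ/2 := add_lt_add (mem_ball.1 hy) (mem_ball.1 hx)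
          _ = ρ := by ring
      have hvx : v ∈ ball x (ρ/2) := by
        rw [mem_ball, dist_comm]; exact mem_ball.1 hx
      exact extend x hxA (ρ/2) (by linarith) hsub hvx
    obtain ⟨x, hxΩ, hxA, hxB⟩ :=
      hΩc A B hAopen hBopen
        (fun v hv => by by_cases hvA : v ∈ A
                        · exact Or.inl hvA
                        · exact Or.inr ⟨hv, hvA⟩)
        ⟨z, hz, hzA⟩ ⟨w, hw, hw, hwA⟩
    exact hxB.2 hxA

/-- The truncated ramp function. -/
def rampR (x : ℝ) : ℝ := max 0 (min 1 x)

lemma rampR_nonneg (x : ℝ) : 0 ≤ rampR x := le_max_left _ _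

lemma rampR_le_one (x : ℝ) : rampR x ≤ 1 := max_le zero_le_one (min_le_left _ _)

lemma rampR_of_nonpos {x : ℝ} (h : x ≤ 0) : rampR x = 0 :=
  max_eq_left (le_trans (min_le_right _ _) h)

lemma rampR_of_one_le {x : ℝ} (h : 1 ≤ x) : rampR x = 1 := by
  rw [rampR, min_eq_left h, max_eq_right zero_le_one]

lemma rampR_continuous : Continuous rampR :=
  continuous_const.max (continuous_const.min continuous_id)

set_option maxHeartbeats 2000000 in
/-- Any two points of an open preconnected set are joined by an analytic disc. -/
lemma exists_disc {E : Type*} [NormedAddCommGroup E] [NormedSpace ℂ E]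
    {Ω : Set E} (hΩo : IsOpen Ω) (hΩc : IsPreconnected Ω) {z w : E}
    (hz : z ∈ Ω) (hw : w ∈ Ω) :
    ∃ (f : ℂ → E) (l : ℂ), DifferentiableOn ℂ f (ball 0 1) ∧ MapsTo f (ball 0 1) Ω ∧
      f 0 = z ∧ f l = w ∧ l ∈ ball (0:ℂ) 1 := by
  obtain ⟨m, p, hp0, hpm, hseg⟩ := exists_chain hΩo hΩc hz hw
  rcases Nat.eq_zero_or_pos m with hm0 | hm
  · refine ⟨fun _ => z, 0, differentiableOn_const _, fun t _ => hz, rfl, ?_,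
      mem_ball_self one_pos⟩
    show z = w
    rw [← hpm, hm0, hp0]
  · set v : ℕ → E := fun i => p (i + 1) - p i with hv
    set K : Set E := ⋃ i ∈ Finset.range m, segment ℝ (p i) (p (i + 1)) with hK
    have hKcompact : IsCompact K := by
      apply (Finset.range m).isCompact_biUnion
      intro i _
      rw [segment_eq_image']
      exact isCompact_Icc.image (by continuity)
    have hKΩ : K ⊆ Ω := by
      intro x hx
      obtain ⟨i, hi, hxi⟩ := Set.mem_iUnion₂.1 hx
      exact hseg i (Finset.mem_range.1 hi) hxi
    obtain ⟨δ, hδ, hδΩ⟩ := hKcompact.exists_thickening_subset_open hΩo hKΩ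
    set V : ℝ := ∑ i ∈ Finset.range m, ‖v i‖ with hV
    have hV0 : 0 ≤ V := Finset.sum_nonneg fun _ _ => norm_nonneg _
    set ε : ℝ := δ / (5 * (V + 1)) with hε
    have hεpos : 0 < ε := by positivity
    set M : ℝ := (m : ℝ) + 1 with hM
    have hm1 : (1:ℝ) ≤ (m:ℝ) := by exact_mod_cast hm
    have hMpos : 0 < M := by rw [hM]; linarith
    obtain ⟨q, hq⟩ := exists_polynomial_near_of_continuousOn (-M) M rampR
      rampR_continuous.continuousOn (ε/2) (by positivity)
    set Pc : ℂ → ℂ := fun ζ => (q.map (algebraMap ℝ ℂ)).eval ζ with hPc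
    have hPcont : Continuous Pc := (q.map (algebraMap ℝ ℂ)).continuous
    have hPreal : ∀ x : ℝ, Pc ↑x = ↑(q.eval x) := by
      intro x
      show (q.map (algebraMap ℝ ℂ)).eval ↑x = _
      rw [Polynomial.eval_map, show ((x:ℂ)) = algebraMap ℝ ℂ x from rfl,
        Polynomial.eval₂_at_apply]
      rfl
    obtain ⟨η₀, hη₀, hη₀c⟩ := Metric.uniformContinuousOn_iff.1
      ((isCompact_closedBall (0:ℂ) (3*M)).uniformContinuousOn_of_continuous
        hPcont.continuousOn) (ε/2) (by positivity)
    set η : ℝ := min η₀ 1 / ((m:ℝ)^2 + 1) with hη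
    have hminpos : 0 < min η₀ 1 := lt_min hη₀ one_pos
    have hηpos : 0 < η := by rw [hη]; positivity
    have hη1 : η ≤ 1/2 := by
      rw [hη]
      rw [div_le_iff₀ (by positivity)]
      have : min η₀ 1 ≤ 1 := min_le_right _ _
      nlinarith
    have hmη : (m:ℝ) * η < η₀ := by
      have h1 : (m:ℝ) / ((m:ℝ)^2 + 1) < 1 := by
        rw [div_lt_one (by positivity)]; nlinarith
      calc (m:ℝ) * η = (m:ℝ) / ((m:ℝ)^2 + 1) * (min η₀ 1) := by rw [hη]; ring
        _ < 1 * (min η₀ 1) := mul_lt_mul_of_pos_right h1 hminpos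
        _ ≤ η₀ := by rw [one_mul]; exact min_le_left _ _
    set γ : ℝ → E := fun s => p 0 + ∑ i ∈ Finset.range m, rampR ((m:ℝ) * s - i) • v i
      with hγ
    set Qw : ℂ → E := fun ζ => p 0 + ∑ i ∈ Finset.range m, (Pc ((m:ℂ) * ζ - i)) • v i
      with hQw
    have key : ∀ (ζ : ℂ) (s : ℝ), s ∈ Icc (0:ℝ) 1 → ‖ζ - ↑s‖ ≤ η →
        ‖Qw ζ - γ s‖ ≤ ε * V := by
      intro ζ s hs hζs
      have hterm : ∀ i ∈ Finset.range m,
          ‖(Pc ((m:ℂ) * ζ - i)) • v i - rampR ((m:ℝ) * s - i) • v i‖ ≤ ε * ‖v i‖ := by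
        intro i hi
        rw [Finset.mem_range] at hi
        have hiR : (i:ℝ) ≤ (m:ℝ) := by exact_mod_cast hi.le
        set xi : ℝ := (m:ℝ) * s - i with hxi
        have hx : xi ∈ Icc (-M) M := by
          constructor
          · rw [hxi, hM]; nlinarith [hs.1, hs.2]
          · rw [hxi, hM]; nlinarith [hs.1, hs.2, (Nat.cast_nonneg i : (0:ℝ) ≤ i)]
        have hζn : ‖ζ‖ ≤ 1 + η := by
          have hζeq : ζ = (ζ - ↑s) + ↑s := by ring
          rw [hζeq]
          refine le_trans (norm_add_le _ _) ?_
          have : ‖(↑s:ℂ)‖ ≤ 1 := by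
            rw [Complex.norm_real, Real.norm_eq_abs, abs_of_nonneg hs.1]; exact hs.2
          linarith
        have hmem1 : (m:ℂ) * ζ - i ∈ closedBall (0:ℂ) (3*M) := by
          rw [mem_closedBall_zero_iff]
          have hnm : ‖(m:ℂ)‖ = (m:ℝ) := by
            rw [show ((m:ℂ)) = ((m:ℝ):ℂ) by push_cast; rfl, Complex.norm_real,
              Real.norm_eq_abs, abs_of_nonneg (by positivity)]
          have hni : ‖(i:ℂ)‖ = (i:ℝ) := by
            rw [show ((i:ℂ)) = ((i:ℝ):ℂ) by push_cast; rfl, Complex.norm_real,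
              Real.norm_eq_abs, abs_of_nonneg (by positivity)]
          calc ‖(m:ℂ) * ζ - i‖ ≤ ‖(m:ℂ) * ζ‖ + ‖(i:ℂ)‖ := norm_sub_le _ _
            _ = (m:ℝ) * ‖ζ‖ + (i:ℝ) := by rw [norm_mul, hnm, hni]
            _ ≤ (m:ℝ) * (1 + η) + (m:ℝ) := by
                have := mul_le_mul_of_nonneg_left hζn (by positivity : (0:ℝ) ≤ (m:ℝ))
                linarith
            _ ≤ 3 * M := by rw [hM]; nlinarith
        have hmem2 : ((xi:ℝ):ℂ) ∈ closedBall (0:ℂ) (3*M) := by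
          rw [mem_closedBall_zero_iff, Complex.norm_real, Real.norm_eq_abs]
          have : |xi| ≤ M := abs_le.2 ⟨hx.1, hx.2⟩
          linarith
        have hd1 : dist ((m:ℂ) * ζ - i) (↑xi) < η₀ := by
          rw [dist_eq_norm, show (m:ℂ) * ζ - i - ↑xi = (m:ℂ) * (ζ - ↑s) by
            rw [hxi]; push_cast; ring]
          rw [norm_mul]
          have hnm : ‖(m:ℂ)‖ = (m:ℝ) := by
            rw [show ((m:ℂ)) = ((m:ℝ):ℂ) by push_cast; rfl, Complex.norm_real,
              Real.norm_eq_abs, abs_of_nonneg (by positivity)]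
          rw [hnm]
          calc (m:ℝ) * ‖ζ - ↑s‖ ≤ (m:ℝ) * η :=
                mul_le_mul_of_nonneg_left hζs (by positivity)
            _ < η₀ := hmη
        have t1 : ‖Pc ((m:ℂ) * ζ - i) - Pc ↑xi‖ < ε/2 := by
          rw [← dist_eq_norm]
          exact hη₀c _ hmem1 _ hmem2 hd1
        have t2 : ‖Pc ↑xi - ↑(rampR xi)‖ < ε/2 := by
          rw [hPreal, ← Complex.ofReal_sub, Complex.norm_real, Real.norm_eq_abs]
          exact hq xi hx
        have tmain : ‖Pc ((m:ℂ) * ζ - i) - ↑(rampR xi)‖ ≤ ε := by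
          have := dist_triangle (Pc ((m:ℂ) * ζ - i)) (Pc ↑xi) ((rampR xi : ℝ) : ℂ)
          simp only [dist_eq_norm] at this
          linarith
        rw [show rampR ((m:ℝ) * s - i) • v i = ((rampR xi : ℝ) : ℂ) • v i by
          rw [Complex.coe_smul, hxi]]
        rw [← sub_smul, norm_smul]
        exact mul_le_mul_of_nonneg_right tmain (norm_nonneg _)
      have hdiff : Qw ζ - γ s = ∑ i ∈ Finset.range m,
          ((Pc ((m:ℂ) * ζ - i)) • v i - rampR ((m:ℝ) * s - i) • v i) := by
        simp only [hQw, hγ]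
        rw [Finset.sum_sub_distrib, add_sub_add_left_eq_sub]
      rw [hdiff]
      calc ‖∑ i ∈ Finset.range m,
            ((Pc ((m:ℂ) * ζ - i)) • v i - rampR ((m:ℝ) * s - i) • v i)‖
          ≤ ∑ i ∈ Finset.range m,
            ‖(Pc ((m:ℂ) * ζ - i)) • v i - rampR ((m:ℝ) * s - i) • v i‖ :=
            norm_sum_le _ _
        _ ≤ ∑ i ∈ Finset.range m, ε * ‖v i‖ := Finset.sum_le_sum hterm
        _ = ε * V := by rw [hV, Finset.mul_sum]
    have hγ0 : γ 0 = z := by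
      simp only [hγ]
      rw [Finset.sum_eq_zero, add_zero, hp0]
      intro i _
      rw [rampR_of_nonpos (by simp), zero_smul]
    have hγ1 : γ 1 = w := by
      simp only [hγ]
      have hcong : ∀ i ∈ Finset.range m, rampR ((m:ℝ) * 1 - i) • v i = p (i+1) - p i := by
        intro i hi
        rw [Finset.mem_range] at hi
        have hiR : (i:ℝ) + 1 ≤ (m:ℝ) := by exact_mod_cast hi
        rw [rampR_of_one_le (by linarith), one_smul]
      rw [Finset.sum_congr rfl hcong, Finset.sum_range_sub, ← hpm]
      abel
    have hγK : ∀ s ∈ Icc (0:ℝ) 1, γ s ∈ K := by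
      intro s hs
      set j : ℕ := min (Nat.floor ((m:ℝ) * s)) (m - 1) with hj
      have hjm1 : j ≤ m - 1 := min_le_right _ _
      have hjm : j < m := by omega
      have hjR : (j:ℝ) ≤ (m:ℝ) * s := by
        have h1 : j ≤ Nat.floor ((m:ℝ) * s) := min_le_left _ _
        have h2 : ((Nat.floor ((m:ℝ) * s) : ℕ) : ℝ) ≤ (m:ℝ) * s :=
          Nat.floor_le (mul_nonneg (by positivity) hs.1)
        calc (j:ℝ) ≤ ((Nat.floor ((m:ℝ) * s) : ℕ) : ℝ) := by exact_mod_cast h1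
          _ ≤ _ := h2
      have hsum : γ s = p j + rampR ((m:ℝ) * s - j) • v j := by
        simp only [hγ]
        rw [← Finset.sum_range_add_sum_Ico _ (by omega : j + 1 ≤ m)]
        have hIco : ∑ i ∈ Finset.Ico (j+1) m, rampR ((m:ℝ) * s - i) • v i = 0 := by
          apply Finset.sum_eq_zero
          intro i hi
          rw [Finset.mem_Ico] at hi
          have hjfl : j = Nat.floor ((m:ℝ) * s) := by
            rcases le_or_gt (Nat.floor ((m:ℝ) * s)) (m-1) with hc | hc
            · rw [hj, min_eq_left hc]
            · exfalso
              have : j = m - 1 := by rw [hj, min_eq_right hc.le]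
              omega
          have hfloor := Nat.lt_floor_add_one ((m:ℝ) * s)
          have hcast : ((Nat.floor ((m:ℝ) * s) : ℕ) : ℝ) + 1 ≤ (i:ℝ) := by
            exact_mod_cast (by omega : Nat.floor ((m:ℝ) * s) + 1 ≤ i)
          rw [rampR_of_nonpos (by linarith), zero_smul]
        rw [hIco, add_zero, Finset.sum_range_succ]
        have hcong : ∀ i ∈ Finset.range j,
            rampR ((m:ℝ) * s - i) • v i = p (i+1) - p i := by
          intro i hi
          rw [Finset.mem_range] at hi
          have hi1 : (i:ℝ) + 1 ≤ (j:ℝ) := by exact_mod_cast hi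
          rw [rampR_of_one_le (by linarith), one_smul]
        rw [Finset.sum_congr rfl hcong, Finset.sum_range_sub]
        abel
      rw [hsum]
      have hmemseg : p j + rampR ((m:ℝ) * s - j) • v j ∈ segment ℝ (p j) (p (j+1)) := by
        rw [segment_eq_image']
        exact ⟨rampR ((m:ℝ) * s - j), ⟨rampR_nonneg _, rampR_le_one _⟩, rfl⟩
      exact Set.mem_biUnion (Finset.mem_range.2 hjm) hmemseg
    obtain ⟨ψ, τ, hψdiff, hψ0, hτ0, hτ1, hψτ, hψbound⟩ :=
      psi_disc (2*η) (by positivity) (by linarith)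
    set g : ℂ → E := fun ζ => Qw ζ + (1 - ζ) • (z - Qw 0) + ζ • (w - Qw 1) with hg
    set f : ℂ → E := fun t => g ((1 - ψ t)/2) with hf
    have hQdiff : Differentiable ℂ Qw := by
      intro x
      apply DifferentiableAt.add (differentiableAt_const _)
      apply DifferentiableAt.fun_sum
      intro i _
      apply DifferentiableAt.smul_const
      exact DifferentiableAt.comp x ((q.map (algebraMap ℝ ℂ)).differentiableAt)
        (by fun_prop)
    have hgdiff : Differentiable ℂ g := by
      intro x
      apply DifferentiableAt.add
      apply DifferentiableAt.add (hQdiff x)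
      · exact ((differentiableAt_const _).sub differentiableAt_id).smul_const _
      · exact differentiableAt_id.smul_const _
    have hfdiff : DifferentiableOn ℂ f (ball 0 1) := by
      intro t ht
      have h1 : DifferentiableWithinAt ℂ ψ (ball 0 1) t := hψdiff t ht
      exact (hgdiff _).comp_differentiableWithinAt t
        (((differentiableWithinAt_const _).sub h1).div_const 2)
    have hmaps : MapsTo f (ball 0 1) Ω := by
      intro t ht
      obtain ⟨r, hrIcc, hrb⟩ := hψbound t ht
      set s : ℝ := (1 - r)/2 with hs
      have hsIcc : s ∈ Icc (0:ℝ) 1 := ⟨by rw [hs]; linarith [hrIcc.2], by rw [hs]; linarith [hrIcc.1]⟩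
      set ζ : ℂ := (1 - ψ t)/2 with hζ
      have hζs : ‖ζ - ↑s‖ ≤ η := by
        have heq : ζ - ↑s = (↑r - ψ t)/2 := by rw [hζ, hs]; push_cast; ring
        rw [heq, norm_div, norm_sub_rev]
        have h2 : ‖(2:ℂ)‖ = 2 := by norm_num
        rw [h2]
        linarith
      have h1 : ‖Qw ζ - γ s‖ ≤ ε * V := key ζ s hsIcc hζs
      have h0' : ‖z - Qw 0‖ ≤ ε * V := by
        have hk := key 0 0 ⟨le_rfl, zero_le_one⟩ (by simpa using hηpos.le)
        rw [hγ0] at hk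
        rwa [norm_sub_rev] at hk
      have h1' : ‖w - Qw 1‖ ≤ ε * V := by
        have hk := key 1 1 ⟨zero_le_one, le_rfl⟩ (by simpa using hηpos.le)
        rw [hγ1] at hk
        rwa [norm_sub_rev] at hk
      have hζb : ‖ζ‖ ≤ 2 := by
        have heq : ζ = (ζ - ↑s) + ↑s := by ring
        rw [heq]
        refine le_trans (norm_add_le _ _) ?_
        have : ‖(↑s:ℂ)‖ ≤ 1 := by
          rw [Complex.norm_real, Real.norm_eq_abs, abs_of_nonneg hsIcc.1]; exact hsIcc.2
        linarith
      have h1ζb : ‖1 - ζ‖ ≤ 2 := by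
        have heq : (1:ℂ) - ζ = (↑s - ζ) + ↑(1 - s) := by push_cast; ring
        rw [heq]
        refine le_trans (norm_add_le _ _) ?_
        have e1 : ‖(↑s:ℂ) - ζ‖ ≤ η := by rwa [norm_sub_rev]
        have e2 : ‖(↑(1 - s):ℂ)‖ ≤ 1 := by
          rw [Complex.norm_real, Real.norm_eq_abs, abs_of_nonneg (by linarith [hsIcc.2])]
          linarith [hsIcc.1]
        linarith
      have hft : f t - γ s = (Qw ζ - γ s) + (1 - ζ) • (z - Qw 0) + ζ • (w - Qw 1) := by
        show g ζ - γ s = _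
        simp only [hg]
        abel
      have hdist : ‖f t - γ s‖ < δ := by
        rw [hft]
        have b1 : ‖(1 - ζ) • (z - Qw 0)‖ ≤ 2 * (ε * V) := by
          rw [norm_smul]
          exact mul_le_mul h1ζb h0' (norm_nonneg _) (by norm_num)
        have b2 : ‖ζ • (w - Qw 1)‖ ≤ 2 * (ε * V) := by
          rw [norm_smul]
          exact mul_le_mul hζb h1' (norm_nonneg _) (by norm_num)
        have hb : ‖(Qw ζ - γ s) + (1 - ζ) • (z - Qw 0) + ζ • (w - Qw 1)‖
            ≤ ε * V + 2 * (ε * V) + 2 * (ε * V) :=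
          le_trans (norm_add₃_le) (by gcongr)
        have hlt : ε * V + 2 * (ε * V) + 2 * (ε * V) < δ := by
          have : ε * V < δ / 5 := by
            rw [hε, div_mul_eq_mul_div, div_lt_div_iff₀ (by positivity) (by norm_num)]
            nlinarith
          linarith
        linarith
      exact hδΩ (Metric.mem_thickening_iff.2 ⟨γ s, hγK s hsIcc, by rwa [dist_eq_norm]⟩)
    have hf0 : f 0 = z := by
      show g ((1 - ψ 0)/2) = z
      rw [hψ0]
      norm_num
      show Qw 0 + ((1:ℂ) - 0) • (z - Qw 0) + (0:ℂ) • (w - Qw 1) = z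
      simp
    have hfτ : f ↑τ = w := by
      show g ((1 - ψ ↑τ)/2) = w
      rw [hψτ]
      norm_num
      show Qw 1 + ((1:ℂ) - 1) • (z - Qw 0) + (1:ℂ) • (w - Qw 1) = w
      simp
    refine ⟨f, ↑τ, hfdiff, hmaps, hf0, hfτ, ?_⟩
    rw [mem_ball_zero_iff, Complex.norm_real, Real.norm_eq_abs, abs_of_pos hτ0]
    exact hτ1

lemma lempert_le_norm {E : Type*} [NormedAddCommGroup E] [NormedSpace ℂ E]
    {Ω : Set E} {z w : E} {f : ℂ → E} {l : ℂ}
    (hfd : DifferentiableOn ℂ f (ball 0 1)) (hfm : MapsTo f (ball 0 1) Ω)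
    (h0 : f 0 = z) (hl : f l = w) (hlb : l ∈ ball (0:ℂ) 1) :
    lempert Ω z w ≤ ‖l‖ := by
  simp only [lempert]
  apply csInf_le
  · exact ⟨0, by rintro r ⟨f', l', -, -, -, -, -, rfl⟩; exact norm_nonneg l'⟩
  · exact ⟨f, l, hfd, hfm, h0, hl, hlb, rfl⟩

set_option maxHeartbeats 2000000 in
/-- Lemma 2.3: the Lempert function is upper semicontinuous on `Ω × Ω`. -/
theorem lempert_upperSemicontinuousOn {E : Type*} [NormedAddCommGroup E] [NormedSpace ℂ E]
    [CompleteSpace E] (Ω : Set E) (hΩo : IsOpen Ω) (hΩc : IsConnected Ω) :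
    UpperSemicontinuousOn (fun p : E × E => lempert Ω p.1 p.2) (Ω ×ˢ Ω) := by
  rintro ⟨z, w⟩ hzw y hy
  obtain ⟨hz, hw⟩ := hzw
  have hy' : lempert Ω z w < y := hy
  have hSne : {r : ℝ | ∃ (f : ℂ → E) (l : ℂ), DifferentiableOn ℂ f (ball 0 1) ∧
      MapsTo f (ball 0 1) Ω ∧ f 0 = z ∧ f l = w ∧ l ∈ ball (0:ℂ) 1 ∧ r = ‖l‖}.Nonempty := by
    obtain ⟨f, l, h1, h2, h3, h4, h5⟩ := exists_disc hΩo hΩc.isPreconnected hz hw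
    exact ⟨‖l‖, f, l, h1, h2, h3, h4, h5, rfl⟩
  have hSbdd : BddBelow {r : ℝ | ∃ (f : ℂ → E) (l : ℂ), DifferentiableOn ℂ f (ball 0 1) ∧
      MapsTo f (ball 0 1) Ω ∧ f 0 = z ∧ f l = w ∧ l ∈ ball (0:ℂ) 1 ∧ r = ‖l‖} :=
    ⟨0, by rintro r ⟨f', l', -, -, -, -, -, rfl⟩; exact norm_nonneg l'⟩
  have h0le : 0 ≤ lempert Ω z w := by
    simp only [lempert]
    apply le_csInf hSne
    rintro r ⟨f', l', -, -, -, -, -, rfl⟩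
    exact norm_nonneg l'
  have hy0 : 0 < y := lt_of_le_of_lt h0le hy'
  rw [lempert] at hy'
  obtain ⟨r, ⟨f, l, hfd, hfm, hf0, hfl, hlb, rfl⟩, hry⟩ := (csInf_lt_iff hSbdd hSne).1 hy'
  by_cases hl0 : l = 0
  · -- the degenerate case: `w = z`, use small affine discs
    have hweq : w = z := by rw [← hfl, hl0, hf0]
    subst hweq
    obtain ⟨ρ, hρ, hball⟩ := Metric.isOpen_iff.1 hΩo w hz
    set ε₁ : ℝ := min (ρ/4) (y*ρ/8) with hε₁
    have hε₁pos : 0 < ε₁ := lt_min (by linarith) (by positivity)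
    have hε₁a : ε₁ ≤ ρ/4 := min_le_left _ _
    have hε₁b : ε₁ ≤ y*ρ/8 := min_le_right _ _
    have hev : (ball w ε₁ ×ˢ ball w ε₁) ∈ 𝓝[Ω ×ˢ Ω] ((w, w) : E × E) :=
      nhdsWithin_le_nhds (prod_mem_nhds (ball_mem_nhds _ hε₁pos) (ball_mem_nhds _ hε₁pos))
    filter_upwards [hev, self_mem_nhdsWithin] with q hq hqΩ
    show lempert Ω q.1 q.2 < y
    have hq1 : ‖q.1 - w‖ < ε₁ := mem_ball_iff_norm.1 hq.1
    have hq2 : ‖q.2 - w‖ < ε₁ := mem_ball_iff_norm.1 hq.2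
    by_cases hne : q.2 = q.1
    · have : lempert Ω q.1 q.2 ≤ ‖(0:ℂ)‖ :=
        lempert_le_norm (f := fun _ => q.1) (differentiableOn_const _)
          (fun t _ => hqΩ.1) rfl (by rw [hne]) (mem_ball_self one_pos)
      simpa using lt_of_le_of_lt this (by simpa using hy0)
    · set c : E := q.2 - q.1 with hc
      have hc0 : c ≠ 0 := by rw [hc, sub_ne_zero]; exact hne
      have hcn : 0 < ‖c‖ := norm_pos_iff.2 hc0
      set lc : ℂ := ((2 * ‖c‖ / ρ : ℝ) : ℂ) with hlc
      set F : ℂ → E := fun t => q.1 + (t * ((ρ / (2 * ‖c‖) : ℝ) : ℂ)) • c with hF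
      have hF0 : F 0 = q.1 := by simp [hF]
      have hFl : F lc = q.2 := by
        show q.1 + (lc * _) • c = q.2
        rw [hlc, ← Complex.ofReal_mul,
          show 2 * ‖c‖ / ρ * (ρ / (2 * ‖c‖)) = 1 by field_simp]
        simp [hc]
      have hcb : ‖c‖ < 2 * ε₁ := by
        have heq : c = (q.2 - w) + (w - q.1) := by rw [hc]; abel
        rw [heq]
        have h2 : ‖w - q.1‖ < ε₁ := by rwa [norm_sub_rev]
        calc ‖(q.2 - w) + (w - q.1)‖ ≤ ‖q.2 - w‖ + ‖w - q.1‖ := norm_add_le _ _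
          _ < 2 * ε₁ := by linarith
      have hlcn : ‖lc‖ = 2 * ‖c‖ / ρ := by
        rw [hlc, Complex.norm_real, Real.norm_eq_abs, abs_of_pos (by positivity)]
      have hlcy : ‖lc‖ < y := by
        rw [hlcn, div_lt_iff₀ hρ]
        nlinarith
      have hlc1 : ‖lc‖ < 1 := by
        rw [hlcn, div_lt_one hρ]
        nlinarith
      have hFd : DifferentiableOn ℂ F (ball 0 1) :=
        ((differentiable_const _).add
          ((differentiable_id.mul_const _).smul_const _)).differentiableOn
      have hFm : MapsTo F (ball 0 1) Ω := by
        intro t ht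
        apply hball
        rw [mem_ball, dist_eq_norm]
        have heq : F t - w = (q.1 - w) + (t * ((ρ / (2 * ‖c‖) : ℝ) : ℂ)) • c := by
          show q.1 + _ - w = _; abel
        rw [heq]
        have hb : ‖(t * ((ρ / (2 * ‖c‖) : ℝ) : ℂ)) • c‖ ≤ ρ/2 := by
          rw [norm_smul, norm_mul, Complex.norm_real, Real.norm_eq_abs,
            abs_of_pos (by positivity : (0:ℝ) < ρ / (2 * ‖c‖))]
          have htn : ‖t‖ ≤ 1 := le_of_lt (mem_ball_zero_iff.1 ht)
          have : ρ / (2 * ‖c‖) * ‖c‖ = ρ/2 := by field_simp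
          calc ‖t‖ * (ρ / (2 * ‖c‖)) * ‖c‖ ≤ 1 * (ρ / (2 * ‖c‖)) * ‖c‖ := by
                have : (0:ℝ) < ρ / (2 * ‖c‖) := by positivity
                nlinarith [norm_nonneg t]
            _ = ρ/2 := by rw [one_mul]; exact this
        calc ‖(q.1 - w) + _‖ ≤ ‖q.1 - w‖ + _ := norm_add_le _ _
          _ < ρ := by linarith
      calc lempert Ω q.1 q.2 ≤ ‖lc‖ :=
            lempert_le_norm hFd hFm hF0 hFl (mem_ball_zero_iff.2 hlc1)
        _ < y := hlcy
  · -- the main case: rescale and perturb the disc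
    have hl1 : ‖l‖ < 1 := mem_ball_zero_iff.1 hlb
    set ρ₁ : ℝ := min y 1 with hρ₁
    have hρ₁pos : 0 < ρ₁ := lt_min hy0 one_pos
    have hlρ₁ : ‖l‖ < ρ₁ := lt_min hry hl1
    set θ : ℝ := (‖l‖ / ρ₁ + 1)/2 with hθ
    have hθ1 : θ < 1 := by
      have : ‖l‖/ρ₁ < 1 := (div_lt_one hρ₁pos).2 hlρ₁
      rw [hθ]; linarith
    have hθpos : 0 < θ := by rw [hθ]; positivity
    have hlθ : ‖l‖ < θ * ρ₁ := by
      have heq : θ * ρ₁ = (‖l‖ + ρ₁)/2 := by rw [hθ]; field_simp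
      rw [heq]; linarith
    set l' : ℂ := l / ((θ:ℝ):ℂ) with hl'
    have hθc : ((θ:ℝ):ℂ) ≠ 0 := by
      simpa using (ne_of_gt hθpos)
    have hl'0 : l' ≠ 0 := div_ne_zero hl0 hθc
    have hl'n : ‖l'‖ = ‖l‖ / θ := by
      rw [hl', norm_div, Complex.norm_real, Real.norm_eq_abs, abs_of_pos hθpos]
    have hl'ρ₁ : ‖l'‖ < ρ₁ := by
      rw [hl'n, div_lt_iff₀ hθpos]
      calc ‖l‖ < θ * ρ₁ := hlθ
        _ = ρ₁ * θ := by ring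
    have hl'pos : 0 < ‖l'‖ := norm_pos_iff.2 hl'0
    have hl'1 : ‖l'‖ ≤ 1 := le_of_lt (lt_of_lt_of_le hl'ρ₁ (min_le_right _ _))
    have hl'y : ‖l'‖ < y := lt_of_lt_of_le hl'ρ₁ (min_le_left _ _)
    set g : ℂ → E := fun t => f (((θ:ℝ):ℂ) * t) with hg
    have hθmap : ∀ t ∈ closedBall (0:ℂ) 1, ((θ:ℝ):ℂ) * t ∈ ball (0:ℂ) 1 := by
      intro t ht
      rw [mem_ball_zero_iff, norm_mul, Complex.norm_real, Real.norm_eq_abs,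
        abs_of_pos hθpos]
      have := mem_closedBall_zero_iff.1 ht
      nlinarith [norm_nonneg t]
    have hgc : ContinuousOn g (closedBall 0 1) := by
      apply hfd.continuousOn.comp ((continuous_const.mul continuous_id).continuousOn)
      exact hθmap
    set K : Set E := g '' closedBall 0 1 with hKdef
    have hKcomp : IsCompact K := (isCompact_closedBall _ _).image_of_continuousOn hgc
    have hKΩ : K ⊆ Ω := by rintro x ⟨t, ht, rfl⟩; exact hfm (hθmap t ht)
    obtain ⟨δ, hδ, hδΩ⟩ := hKcomp.exists_thickening_subset_open hΩo hKΩ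
    set ε₁ : ℝ := δ * ‖l'‖ / 4 with hε₁
    have hε₁pos : 0 < ε₁ := by rw [hε₁]; positivity
    have hev : (ball z ε₁ ×ˢ ball w ε₁) ∈ 𝓝[Ω ×ˢ Ω] ((z, w) : E × E) :=
      nhdsWithin_le_nhds (prod_mem_nhds (ball_mem_nhds _ hε₁pos) (ball_mem_nhds _ hε₁pos))
    filter_upwards [hev, self_mem_nhdsWithin] with q hq hqΩ
    show lempert Ω q.1 q.2 < y
    have hz' : ‖q.1 - z‖ < ε₁ := mem_ball_iff_norm.1 hq.1
    have hw' : ‖q.2 - w‖ < ε₁ := mem_ball_iff_norm.1 hq.2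
    set F : ℂ → E := fun t => g t + (q.1 - z) + (t / l') • ((q.2 - w) - (q.1 - z)) with hF
    have hF0 : F 0 = q.1 := by
      show g 0 + (q.1 - z) + ((0:ℂ) / l') • _ = q.1
      rw [zero_div, zero_smul, add_zero]
      have hg0 : g 0 = z := by show f (_ * 0) = z; rw [mul_zero, hf0]
      rw [hg0]; abel
    have hFl : F l' = q.2 := by
      show g l' + (q.1 - z) + (l' / l') • _ = q.2
      rw [div_self hl'0, one_smul]
      have hgl : g l' = w := by
        show f (((θ:ℝ):ℂ) * (l / _)) = w
        rw [mul_div_cancel₀ _ hθc, hfl]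
      rw [hgl]; abel
    have hFd : DifferentiableOn ℂ F (ball 0 1) := by
      intro t ht
      have h1 : DifferentiableWithinAt ℂ g (ball 0 1) t := by
        have h2 : DifferentiableAt ℂ f (((θ:ℝ):ℂ) * t) :=
          (hfd _ (hθmap t (ball_subset_closedBall ht))).differentiableAt
            (isOpen_ball.mem_nhds (hθmap t (ball_subset_closedBall ht)))
        exact (h2.comp t (by fun_prop)).differentiableWithinAt
      exact ((h1.add (differentiableWithinAt_const _)).add
        ((differentiableWithinAt_id.div_const _).smul_const _))
    have hFm : MapsTo F (ball 0 1) Ω := by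
      intro t ht
      have hgt : g t ∈ K := ⟨t, ball_subset_closedBall ht, rfl⟩
      have heq : F t - g t = (q.1 - z) + (t / l') • ((q.2 - w) - (q.1 - z)) := by
        show g t + (q.1 - z) + (t / l') • _ - g t = _
        abel
      have key1 : ‖(q.1 - z) + (t / l') • ((q.2 - w) - (q.1 - z))‖
          ≤ ‖q.1 - z‖ + (‖t‖ / ‖l'‖) * ‖(q.2 - w) - (q.1 - z)‖ := by
        refine le_trans (norm_add_le _ _) ?_
        rw [norm_smul, norm_div]
      have htn : ‖t‖ ≤ 1 := le_of_lt (mem_ball_zero_iff.1 ht)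
      have hdn : ‖(q.2 - w) - (q.1 - z)‖ ≤ ‖q.2 - w‖ + ‖q.1 - z‖ := norm_sub_le _ _
      have e1 : ‖q.1 - z‖ ≤ ε₁ / ‖l'‖ := by
        rw [le_div_iff₀ hl'pos]
        nlinarith [norm_nonneg (q.1 - z)]
      have e2 : (‖t‖ / ‖l'‖) * ‖(q.2 - w) - (q.1 - z)‖ ≤ 2 * ε₁ / ‖l'‖ := by
        rw [div_mul_eq_mul_div]
        apply (div_le_div_iff_of_pos_right hl'pos).2
        nlinarith [norm_nonneg t, norm_nonneg ((q.2 - w) - (q.1 - z))]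
      have e3 : ε₁ / ‖l'‖ + 2 * ε₁ / ‖l'‖ < δ := by
        rw [← add_div, div_lt_iff₀ hl'pos, hε₁]
        nlinarith
      have hpert : ‖F t - g t‖ < δ := by
        rw [heq]
        calc ‖(q.1 - z) + (t / l') • ((q.2 - w) - (q.1 - z))‖
            ≤ ‖q.1 - z‖ + (‖t‖ / ‖l'‖) * ‖(q.2 - w) - (q.1 - z)‖ := key1
          _ ≤ ε₁ / ‖l'‖ + 2 * ε₁ / ‖l'‖ := add_le_add e1 e2
          _ < δ := e3
      exact hδΩ (Metric.mem_thickening_iff.2 ⟨g t, hgt, by rwa [dist_eq_norm]⟩)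
    calc lempert Ω q.1 q.2 ≤ ‖l'‖ :=
          lempert_le_norm hFd hFm hF0 hFl
            (mem_ball_zero_iff.2 (lt_of_lt_of_le hl'ρ₁ (min_le_right _ _)))
      _ < y := hl'y
end

section
/- Let Ω be an unbounded hyperbolic domain in a complex Banach space. Then for every b ∈ Ω, liminf_{z→∞, w→b} l_Ω(z, w) > 0. -/
open Filter Metric Set Topology MeasureTheory

/-! ### Auxiliary lemmas -/

lemma mobius_norm_lt_one {a t : ℂ} (ha : ‖a‖ < 1) (ht : ‖t‖ < 1) :
    ‖(a - t) / (1 - (starRingEnd ℂ) a * t)‖ < 1 := by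
  have hden : (1 - (starRingEnd ℂ) a * t) ≠ 0 := by
    intro h
    have h1 : (1:ℂ) = (starRingEnd ℂ) a * t := sub_eq_zero.mp h
    have h2 : (1:ℝ) = ‖a‖ * ‖t‖ := by
      calc (1:ℝ) = ‖(1:ℂ)‖ := by simp
        _ = ‖(starRingEnd ℂ) a * t‖ := by rw [← h1]
        _ = ‖a‖ * ‖t‖ := by rw [norm_mul]; simp
    nlinarith [norm_nonneg a, norm_nonneg t]
  rw [norm_div, div_lt_one (norm_pos_iff.mpr hden)]
  have hsa : Complex.normSq a < 1 := by
    rw [Complex.normSq_eq_norm_sq]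
    calc ‖a‖ ^ 2 = ‖a‖^2 := rfl
      _ < 1 := by nlinarith [norm_nonneg a]
  have hst : Complex.normSq t < 1 := by
    rw [Complex.normSq_eq_norm_sq]
    calc ‖t‖ ^ 2 = ‖t‖^2 := rfl
      _ < 1 := by nlinarith [norm_nonneg t]
  have key : ‖a - t‖^2 < ‖1 - (starRingEnd ℂ) a * t‖^2 := by
    rw [Complex.sq_norm, Complex.sq_norm]
    have hid : Complex.normSq (1 - (starRingEnd ℂ) a * t) - Complex.normSq (a - t)
        = (1 - Complex.normSq a) * (1 - Complex.normSq t) := by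
      simp only [Complex.normSq_apply, Complex.sub_re, Complex.sub_im, Complex.mul_re,
        Complex.mul_im, Complex.one_re, Complex.one_im, Complex.conj_re, Complex.conj_im]
      ring
    nlinarith [hid, hsa, hst]
  exact lt_of_pow_lt_pow_left₀ 2 (norm_nonneg _) key

lemma lempert_swap_mem {E : Type*} [NormedAddCommGroup E] [NormedSpace ℂ E]
    {Ω : Set E} {z w : E} {r : ℝ}
    (h : ∃ (f : ℂ → E) (l : ℂ), DifferentiableOn ℂ f (ball 0 1) ∧
      MapsTo f (ball 0 1) Ω ∧ f 0 = z ∧ f l = w ∧ l ∈ ball (0:ℂ) 1 ∧ r = ‖l‖) :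
    ∃ (f : ℂ → E) (l : ℂ), DifferentiableOn ℂ f (ball 0 1) ∧
      MapsTo f (ball 0 1) Ω ∧ f 0 = w ∧ f l = z ∧ l ∈ ball (0:ℂ) 1 ∧ r = ‖l‖ := by
  obtain ⟨f, l, hdf, hmf, h0, hl, hlb, hr⟩ := h
  have hl1 : ‖l‖ < 1 := mem_ball_zero_iff.mp hlb
  set φ : ℂ → ℂ := fun t => (l - t) / (1 - (starRingEnd ℂ) l * t) with hφ
  have hden : ∀ t : ℂ, ‖t‖ < 1 → (1 - (starRingEnd ℂ) l * t) ≠ 0 := by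
    intro t ht h
    have h1 : (1:ℂ) = (starRingEnd ℂ) l * t := sub_eq_zero.mp h
    have h2 : (1:ℝ) = ‖l‖ * ‖t‖ := by
      calc (1:ℝ) = ‖(1:ℂ)‖ := by simp
        _ = ‖(starRingEnd ℂ) l * t‖ := by rw [← h1]
        _ = ‖l‖ * ‖t‖ := by rw [norm_mul]; simp
    nlinarith [norm_nonneg l, norm_nonneg t]
  have hφmaps : MapsTo φ (ball 0 1) (ball 0 1) := by
    intro t ht
    exact mem_ball_zero_iff.mpr (mobius_norm_lt_one hl1 (mem_ball_zero_iff.mp ht))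
  have hφdiff : DifferentiableOn ℂ φ (ball 0 1) := by
    apply DifferentiableOn.div
    · exact (differentiableOn_const l).sub differentiableOn_id
    · exact (differentiableOn_const 1).sub ((differentiableOn_const _).mul differentiableOn_id)
    · exact fun t ht => hden t (mem_ball_zero_iff.mp ht)
  have hφ0 : φ 0 = l := by simp [hφ]
  have hφl : φ l = 0 := by simp [hφ]
  refine ⟨f ∘ φ, l, hdf.comp hφdiff hφmaps, hmf.comp hφmaps, ?_, ?_, hlb, hr⟩
  · simp [Function.comp, hφ0, hl]
  · simp [Function.comp, hφl, h0]

lemma lempert_symm {E : Type*} [NormedAddCommGroup E] [NormedSpace ℂ E]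
    (Ω : Set E) (z w : E) : lempert Ω z w = lempert Ω w z := by
  unfold lempert
  congr 1
  ext r
  exact ⟨fun h => lempert_swap_mem h, fun h => lempert_swap_mem h⟩

lemma lempert_nonneg {E : Type*} [NormedAddCommGroup E] [NormedSpace ℂ E]
    (Ω : Set E) (z w : E) : 0 ≤ lempert Ω z w := by
  apply Real.sInf_nonneg
  rintro r ⟨f, l, -, -, -, -, -, rfl⟩
  exact norm_nonneg l

lemma lempert_lt_one {E : Type*} [NormedAddCommGroup E] [NormedSpace ℂ E]
    (Ω : Set E) (z w : E) : lempert Ω z w < 1 := by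
  unfold lempert
  set S := {r : ℝ | ∃ (f : ℂ → E) (l : ℂ), DifferentiableOn ℂ f (ball 0 1) ∧
    MapsTo f (ball 0 1) Ω ∧ f 0 = z ∧ f l = w ∧ l ∈ ball (0:ℂ) 1 ∧ r = ‖l‖} with hS
  rcases Set.eq_empty_or_nonempty S with h | ⟨x, hx⟩
  · rw [h, Real.sInf_empty]; norm_num
  · have hbdd : BddBelow S := ⟨0, by rintro r ⟨f, l, -, -, -, -, -, rfl⟩; exact norm_nonneg l⟩
    have hle : sInf S ≤ x := csInf_le hbdd hx
    obtain ⟨f, l, -, -, -, -, hlb, rfl⟩ := hx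
    exact lt_of_le_of_lt hle (mem_ball_zero_iff.mp hlb)

lemma poincareDist_nonneg {r : ℝ} (h0 : 0 ≤ r) (h1 : r < 1) : 0 ≤ poincareDist r := by
  unfold poincareDist
  have : (1:ℝ) ≤ (1+r)/(1-r) := (one_le_div (by linarith)).mpr (by linarith)
  nlinarith [Real.log_nonneg this]

lemma poincareDist_lt_poincareDist {r s : ℝ} (h0 : 0 ≤ r) (hrs : r < s) (hs : s < 1) :
    poincareDist r < poincareDist s := by
  unfold poincareDist
  have h1 : (0:ℝ) < (1+r)/(1-r) := div_pos (by linarith) (by linarith)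
  have h2 : (1+r)/(1-r) < (1+s)/(1-s) := by
    rw [div_lt_div_iff₀ (by linarith) (by linarith)]
    nlinarith
  nlinarith [Real.log_lt_log h1 h2]

lemma poincareDist_continuousAt : ContinuousAt poincareDist 0 := by
  unfold poincareDist
  apply ContinuousAt.mul continuousAt_const
  apply ContinuousAt.comp (x := (0:ℝ)) (Real.continuousAt_log (by norm_num))
  exact ContinuousAt.div (by fun_prop) (by fun_prop) (by norm_num)

lemma kobayashi_set_bddBelow {E : Type*} [NormedAddCommGroup E] [NormedSpace ℂ E]
    (Ω : Set E) (z w : E) :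
    BddBelow {r : ℝ | ∃ (n : ℕ) (c : ℕ → E), c 0 = z ∧ c n = w ∧ (∀ i, i ≤ n → c i ∈ Ω) ∧
      r = ∑ i ∈ Finset.range n, poincareDist (lempert Ω (c i) (c (i+1)))} := by
  refine ⟨0, ?_⟩
  rintro r ⟨n, c, -, -, -, rfl⟩
  exact Finset.sum_nonneg fun i _ =>
    poincareDist_nonneg (lempert_nonneg _ _ _) (lempert_lt_one _ _ _)

lemma exists_chain_lt {E : Type*} [NormedAddCommGroup E] [NormedSpace ℂ E]
    {Ω : Set E} {z w : E} (hz : z ∈ Ω) (hw : w ∈ Ω) {d : ℝ}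
    (h : kobayashi Ω z w < d) :
    ∃ (n : ℕ) (cc : ℕ → E), cc 0 = z ∧ cc n = w ∧ (∀ i, i ≤ n → cc i ∈ Ω) ∧
      (∑ i ∈ Finset.range n, poincareDist (lempert Ω (cc i) (cc (i+1)))) < d := by
  unfold kobayashi at h
  have hne : {r : ℝ | ∃ (n : ℕ) (c : ℕ → E), c 0 = z ∧ c n = w ∧ (∀ i, i ≤ n → c i ∈ Ω) ∧
      r = ∑ i ∈ Finset.range n, poincareDist (lempert Ω (c i) (c (i+1)))}.Nonempty := by
    refine ⟨_, 1, fun i => if i = 0 then z else w, by simp, by simp, ?_, rfl⟩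
    intro i _
    by_cases hi : i = 0 <;> simp [hi, hz, hw]
  obtain ⟨r, ⟨n, cc, h0, hn, hm, rfl⟩, hrd⟩ := exists_lt_of_csInf_lt hne h
  exact ⟨n, cc, h0, hn, hm, hrd⟩

lemma kobayashi_le_chain {E : Type*} [NormedAddCommGroup E] [NormedSpace ℂ E]
    {Ω : Set E} {z w : E} {n : ℕ} {cc : ℕ → E}
    (h0 : cc 0 = z) (hn : cc n = w) (hm : ∀ i, i ≤ n → cc i ∈ Ω) :
    kobayashi Ω z w ≤ ∑ i ∈ Finset.range n, poincareDist (lempert Ω (cc i) (cc (i+1))) :=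
  csInf_le (kobayashi_set_bddBelow Ω z w) ⟨n, cc, h0, hn, hm, rfl⟩

/-- Theorem 3.1, (a) ⇒ (b): on an unbounded hyperbolic domain, the Lempert function is
bounded below away from `0` as `z → ∞`, `w → b`. -/
theorem lempert_liminf_pos_of_hyperbolic {E : Type*} [NormedAddCommGroup E]
    [NormedSpace ℂ E] [CompleteSpace E] (Ω : Set E) (hΩo : IsOpen Ω) (hΩc : IsConnected Ω)
    (hub : ¬ Bornology.IsBounded Ω) (hhyp : IsHyperbolic Ω) :
    ∀ b ∈ Ω, ∃ c > (0:ℝ), ∀ᶠ p : E × E in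
      (atInfFilter E ⊓ Filter.principal Ω) ×ˢ (nhdsWithin b Ω),
        c ≤ lempert Ω p.1 p.2 := by
  intro b hb
  obtain ⟨-, h2, h3⟩ := hhyp
  obtain ⟨δ₁, hδ₁, H2⟩ := h2 b hb 1 one_pos
  obtain ⟨δ₂, hδ₂, H3⟩ := h3 b hb (δ₁/2) (by linarith)
  -- choose a small `c` with `poincareDist c < δ₁/2`
  have hev : ∀ᶠ r in 𝓝 (0:ℝ), poincareDist r < δ₁/2 ∧ r < 1 := by
    have ha : ∀ᶠ r in 𝓝 (0:ℝ), poincareDist r < δ₁/2 := by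
      have h0 : poincareDist 0 < δ₁/2 := by
        unfold poincareDist; norm_num; linarith
      exact poincareDist_continuousAt.eventually_lt continuousAt_const h0
    have hb' : ∀ᶠ r in 𝓝 (0:ℝ), r < 1 :=
      isOpen_Iio.eventually_mem (show (0:ℝ) ∈ Iio 1 by norm_num)
    exact ha.and hb'
  obtain ⟨c, ⟨hcd, hc1⟩, hc0⟩ :=
    ((hev.filter_mono nhdsWithin_le_nhds).and self_mem_nhdsWithin).exists
      (f := 𝓝[>] (0:ℝ))
  refine ⟨c, hc0, ?_⟩
  have key : ∀ z ∈ Ω, ‖b‖ + 1 ≤ ‖z‖ → ∀ w ∈ Ω, ‖w - b‖ < δ₂ → c ≤ lempert Ω z w := by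
    intro z hz hzn w hw hwb
    by_contra hlt
    push_neg at hlt
    have hkbw : kobayashi Ω b w < δ₁/2 := H3 w hw hwb
    obtain ⟨n, cc, hc0', hcn, hcm, hsum⟩ := exists_chain_lt hb hw hkbw
    set cc' : ℕ → E := fun i => if i ≤ n then cc i else z with hcc'
    have h0' : cc' 0 = b := by simp [hcc', hc0']
    have hn' : cc' (n+1) = z := by simp [hcc']
    have hm' : ∀ i, i ≤ n+1 → cc' i ∈ Ω := by
      intro i _
      simp only [hcc']
      split_ifs with h
      · exact hcm i h
      · exact hz
    have hlast : poincareDist (lempert Ω (cc' n) (cc' (n+1))) < δ₁/2 := by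
      have hcn' : cc' n = w := by simp [hcc', hcn]
      rw [hcn', hn']
      calc poincareDist (lempert Ω w z) < poincareDist c := by
            apply poincareDist_lt_poincareDist (lempert_nonneg _ _ _) _ hc1
            rw [lempert_symm]; exact hlt
        _ < δ₁/2 := hcd
    have hsum' : ∑ i ∈ Finset.range (n+1),
        poincareDist (lempert Ω (cc' i) (cc' (i+1))) < δ₁ := by
      rw [Finset.sum_range_succ]
      have heq : ∑ i ∈ Finset.range n, poincareDist (lempert Ω (cc' i) (cc' (i+1)))
          = ∑ i ∈ Finset.range n, poincareDist (lempert Ω (cc i) (cc (i+1))) := by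
        refine Finset.sum_congr rfl fun i hi => ?_
        rw [Finset.mem_range] at hi
        simp [hcc', Nat.le_of_lt hi, Nat.succ_le_of_lt hi]
      rw [heq]
      linarith
    have hkbz : kobayashi Ω b z < δ₁ :=
      lt_of_le_of_lt (kobayashi_le_chain h0' hn' hm') hsum'
    have hzb : ‖z - b‖ < 1 := H2 z hz hkbz
    have := norm_sub_norm_le z b
    linarith
  have hA : ∀ᶠ z in atInfFilter E ⊓ Filter.principal Ω, z ∈ Ω ∧ ‖b‖ + 1 ≤ ‖z‖ := by
    rw [eventually_inf_principal]
    have hmem : {z : E | ‖b‖ + 1 ≤ ‖z‖} ∈ atInfFilter E :=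
      Filter.preimage_mem_comap (Filter.Ici_mem_atTop (‖b‖ + 1))
    filter_upwards [hmem] with z hz hzΩ
    exact ⟨hzΩ, hz⟩
  have hB : ∀ᶠ w in 𝓝[Ω] b, w ∈ Ω ∧ ‖w - b‖ < δ₂ := by
    have h1 : ∀ᶠ w in 𝓝[Ω] b, w ∈ Ω := eventually_mem_nhdsWithin
    have hball : ∀ᶠ w in 𝓝 b, ‖w - b‖ < δ₂ := by
      filter_upwards [Metric.ball_mem_nhds b hδ₂] with w hw
      rwa [mem_ball, dist_eq_norm] at hw
    exact h1.and (hball.filter_mono nhdsWithin_le_nhds)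
  exact (hA.prod_mk hB).mono fun p hp => key p.1 hp.1.1 hp.1.2 p.2 hp.2.1 hp.2.2
end

section
/- Let Ω be an unbounded domain in a complex Banach space such that ∞ is a k'-point of Ω (no k_Ω-Cauchy sequence tends to ∞ in norm). Then Ω is hyperbolic. -/
open Filter Metric Set Topology MeasureTheory

namespace KobayashiProof

/-! ### poincareDist lemmas -/

lemma pd_nonneg {r : ℝ} (h0 : 0 ≤ r) (h1 : r < 1) : 0 ≤ poincareDist r := by
  have h2 : (0:ℝ) < 1 - r := by linarith
  have h3 : (1:ℝ) ≤ (1+r)/(1-r) := (le_div_iff₀ h2).2 (by linarith)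
  have h4 := Real.log_nonneg h3
  unfold poincareDist; linarith

lemma pd_mono {r s : ℝ} (h0 : 0 ≤ r) (hrs : r ≤ s) (h1 : s < 1) :
    poincareDist r ≤ poincareDist s := by
  have hr1 : r < 1 := lt_of_le_of_lt hrs h1
  have h2 : (0:ℝ) < 1 - r := by linarith
  have h3 : (0:ℝ) < 1 - s := by linarith
  have hle : (1+r)/(1-r) ≤ (1+s)/(1-s) := by
    rw [div_le_div_iff₀ h2 h3]; nlinarith
  have hpos : (0:ℝ) < (1+r)/(1-r) := by positivity
  have := Real.log_le_log hpos hle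
  unfold poincareDist; linarith

lemma half_le_pd {r : ℝ} (h0 : 0 ≤ r) (h1 : r < 1) : r / 2 ≤ poincareDist r := by
  have h2 : (0:ℝ) < 1 - r := by linarith
  have h3 : (0:ℝ) < 1 + r := by linarith
  have hx : (0:ℝ) < (1-r)/(1+r) := by positivity
  have hlog : Real.log ((1-r)/(1+r)) ≤ (1-r)/(1+r) - 1 := Real.log_le_sub_one_of_pos hx
  have hinv : Real.log ((1+r)/(1-r)) = - Real.log ((1-r)/(1+r)) := by
    rw [← Real.log_inv]; congr 1; field_simp
  have h4 : (1-r)/(1+r) - 1 = -(2*r/(1+r)) := by field_simp; ring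
  have h5 : r/2 ≤ r/(1+r) := by
    rw [div_le_div_iff₀ (by norm_num) h3]; nlinarith
  have h6 : 2*r/(1+r) = 2*(r/(1+r)) := by ring
  unfold poincareDist
  rw [hinv]
  linarith

lemma pd_le {r : ℝ} (h0 : 0 ≤ r) (h1 : r ≤ 1/2) : poincareDist r ≤ 2*r := by
  have h2 : (0:ℝ) < 1 - r := by linarith
  have hx : (0:ℝ) < (1+r)/(1-r) := by positivity
  have hlog := Real.log_le_sub_one_of_pos hx
  have h3 : (1+r)/(1-r) - 1 = 2*r/(1-r) := by field_simp; ring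
  have h4 : 2*r/(1-r) ≤ 4*r := by rw [div_le_iff₀ h2]; nlinarith
  unfold poincareDist; linarith

/-! ### the Lempert set -/

variable {E : Type*} [NormedAddCommGroup E] [NormedSpace ℂ E]

def lSet (Ω : Set E) (z w : E) : Set ℝ :=
  {r : ℝ | ∃ (f : ℂ → E) (l : ℂ), DifferentiableOn ℂ f (ball 0 1) ∧
    MapsTo f (ball 0 1) Ω ∧ f 0 = z ∧ f l = w ∧ l ∈ ball (0:ℂ) 1 ∧ r = ‖l‖}

lemma lempert_eq (Ω : Set E) (z w : E) : lempert Ω z w = sInf (lSet Ω z w) := rfl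

lemma lSet_nonneg {Ω : Set E} {z w : E} {r : ℝ} (h : r ∈ lSet Ω z w) : 0 ≤ r := by
  obtain ⟨f, l, _, _, _, _, _, rfl⟩ := h; exact norm_nonneg l

lemma lSet_lt_one {Ω : Set E} {z w : E} {r : ℝ} (h : r ∈ lSet Ω z w) : r < 1 := by
  obtain ⟨f, l, _, _, _, _, hl, rfl⟩ := h
  simpa [mem_ball_zero_iff] using hl

lemma lempert_nonneg (Ω : Set E) (z w : E) : 0 ≤ lempert Ω z w :=
  Real.sInf_nonneg (fun _ h => lSet_nonneg h)

lemma lSet_bddBelow (Ω : Set E) (z w : E) : BddBelow (lSet Ω z w) :=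
  ⟨0, fun _ h => lSet_nonneg h⟩

lemma lempert_le_of_mem {Ω : Set E} {z w : E} {r : ℝ} (h : r ∈ lSet Ω z w) :
    lempert Ω z w ≤ r :=
  csInf_le (lSet_bddBelow Ω z w) h

lemma lempert_lt_one (Ω : Set E) (z w : E) : lempert Ω z w < 1 := by
  rcases Set.eq_empty_or_nonempty (lSet Ω z w) with h | ⟨r, hr⟩
  · rw [lempert_eq, h]; simpa [Real.sInf_empty] using one_pos
  · exact lt_of_le_of_lt (lempert_le_of_mem hr) (lSet_lt_one hr)

/-- Möbius automorphism of the disk exchanging `0` and `l`. -/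
lemma mobius_exists {l : ℂ} (hl : l ∈ ball (0:ℂ) 1) :
    ∃ m : ℂ → ℂ, DifferentiableOn ℂ m (ball 0 1) ∧ MapsTo m (ball 0 1) (ball 0 1) ∧
      m 0 = l ∧ m l = 0 := by
  rw [mem_ball_zero_iff] at hl
  refine ⟨fun t => (l - t)/(1 - (starRingEnd ℂ) l * t), ?_, ?_, by simp, by simp⟩
  · intro t ht
    rw [mem_ball_zero_iff] at ht
    have hne : (1:ℂ) - (starRingEnd ℂ) l * t ≠ 0 := by
      intro h
      have h1 : ‖(1:ℂ)‖ ≤ ‖(starRingEnd ℂ) l * t‖ := by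
        have : (1:ℂ) = (starRingEnd ℂ) l * t := by linear_combination h
        rw [← this]
      rw [norm_mul, norm_one] at h1
      have : ‖(starRingEnd ℂ) l‖ = ‖l‖ := by simp
      nlinarith [norm_nonneg t, norm_nonneg l]
    exact (((differentiableAt_const _).sub differentiableAt_id).div
      ((differentiableAt_const _).sub ((differentiableAt_const _).fun_mul differentiableAt_id) :
        DifferentiableAt ℂ (fun s => 1 - (starRingEnd ℂ) l * s) t)
      hne).differentiableWithinAt
  · intro t ht
    rw [mem_ball_zero_iff] at ht
    rw [mem_ball_zero_iff]
    have hne : (1:ℂ) - (starRingEnd ℂ) l * t ≠ 0 := by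
      intro h
      have h1 : ‖(1:ℂ)‖ ≤ ‖(starRingEnd ℂ) l * t‖ := by
        have : (1:ℂ) = (starRingEnd ℂ) l * t := by linear_combination h
        rw [← this]
      rw [norm_mul, norm_one] at h1
      have : ‖(starRingEnd ℂ) l‖ = ‖l‖ := by simp
      nlinarith [norm_nonneg t, norm_nonneg l]
    rw [norm_div, div_lt_one (norm_pos_iff.mpr hne)]
    have key : Complex.normSq (1 - (starRingEnd ℂ) l * t) - Complex.normSq (l - t)
        = (1 - Complex.normSq l) * (1 - Complex.normSq t) := by
      simp only [Complex.normSq_apply, Complex.sub_re, Complex.sub_im, Complex.mul_re,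
        Complex.mul_im, Complex.one_re, Complex.one_im, Complex.conj_re, Complex.conj_im]
      ring
    have hl2 : Complex.normSq l < 1 := by
      have : Complex.normSq l = ‖l‖^2 := by rw [← Complex.sq_norm]
      rw [this]; nlinarith [norm_nonneg l]
    have ht2 : Complex.normSq t < 1 := by
      have : Complex.normSq t = ‖t‖^2 := by rw [← Complex.sq_norm]
      rw [this]; nlinarith [norm_nonneg t]
    have hpos : 0 < Complex.normSq (1 - (starRingEnd ℂ) l * t) - Complex.normSq (l - t) := by
      rw [key]; nlinarith
    have e1 : Complex.normSq (l - t) = ‖l - t‖^2 := by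
      rw [← Complex.sq_norm]
    have e2 : Complex.normSq (1 - (starRingEnd ℂ) l * t) = ‖1 - (starRingEnd ℂ) l * t‖^2 := by
      rw [← Complex.sq_norm]
    nlinarith [norm_nonneg (l - t), norm_nonneg (1 - (starRingEnd ℂ) l * t)]

lemma lSet_symm_subset (Ω : Set E) (z w : E) : lSet Ω z w ⊆ lSet Ω w z := by
  rintro r ⟨f, l, hd, hm, hz, hw, hl, rfl⟩
  obtain ⟨m, hmd, hmm, hm0, hml⟩ := mobius_exists hl
  refine ⟨f ∘ m, l, hd.comp hmd hmm, hm.comp hmm, by simp [Function.comp, hm0, hw],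
    by simp [Function.comp, hml, hz], hl, rfl⟩

lemma lempert_symm (Ω : Set E) (z w : E) : lempert Ω z w = lempert Ω w z := by
  rw [lempert_eq, lempert_eq, Set.Subset.antisymm (lSet_symm_subset Ω z w) (lSet_symm_subset Ω w z)]

def kSet (Ω : Set E) (z w : E) : Set ℝ :=
  {r : ℝ | ∃ (n : ℕ) (c : ℕ → E), c 0 = z ∧ c n = w ∧ (∀ i, i ≤ n → c i ∈ Ω) ∧
    r = ∑ i ∈ Finset.range n, poincareDist (lempert Ω (c i) (c (i+1)))}

lemma kobayashi_eq (Ω : Set E) (z w : E) : kobayashi Ω z w = sInf (kSet Ω z w) := rfl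

lemma kSet_nonneg {Ω : Set E} {z w : E} {r : ℝ} (h : r ∈ kSet Ω z w) : 0 ≤ r := by
  obtain ⟨n, c, _, _, _, rfl⟩ := h
  exact Finset.sum_nonneg fun i _ =>
    pd_nonneg (lempert_nonneg Ω _ _) (lempert_lt_one Ω _ _)

lemma kSet_bddBelow (Ω : Set E) (z w : E) : BddBelow (kSet Ω z w) :=
  ⟨0, fun _ h => kSet_nonneg h⟩

lemma kSet_nonempty {Ω : Set E} {z w : E} (hz : z ∈ Ω) (hw : w ∈ Ω) :
    (kSet Ω z w).Nonempty := by
  refine ⟨poincareDist (lempert Ω z w), 1, fun i => if i = 0 then z else w, by simp, by simp, ?_, ?_⟩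
  · intro i hi
    interval_cases i <;> simp [hz, hw]
  · simp

lemma kob_nonneg (Ω : Set E) (z w : E) : 0 ≤ kobayashi Ω z w :=
  Real.sInf_nonneg fun _ h => kSet_nonneg h

lemma kob_le_of_mem {Ω : Set E} {z w : E} {r : ℝ} (h : r ∈ kSet Ω z w) :
    kobayashi Ω z w ≤ r :=
  csInf_le (kSet_bddBelow Ω z w) h

lemma kob_le_pd {Ω : Set E} {z w : E} (hz : z ∈ Ω) (hw : w ∈ Ω) :
    kobayashi Ω z w ≤ poincareDist (lempert Ω z w) := by
  refine kob_le_of_mem ⟨1, fun i => if i = 0 then z else w, by simp, by simp, ?_, ?_⟩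
  · intro i hi; interval_cases i <;> simp [hz, hw]
  · simp

lemma exists_chain_of_lt {Ω : Set E} {z w : E} (hz : z ∈ Ω) (hw : w ∈ Ω) {δ : ℝ}
    (h : kobayashi Ω z w < δ) :
    ∃ (n : ℕ) (c : ℕ → E), c 0 = z ∧ c n = w ∧ (∀ i, i ≤ n → c i ∈ Ω) ∧
      (∑ i ∈ Finset.range n, poincareDist (lempert Ω (c i) (c (i+1)))) < δ := by
  obtain ⟨r, hr, hrδ⟩ := exists_lt_of_csInf_lt (kSet_nonempty hz hw) h
  obtain ⟨n, c, h0, hn, hmem, rfl⟩ := hr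
  exact ⟨n, c, h0, hn, hmem, hrδ⟩

lemma kSet_add {Ω : Set E} {z w v : E} {r1 r2 : ℝ}
    (h1 : r1 ∈ kSet Ω z w) (h2 : r2 ∈ kSet Ω w v) : r1 + r2 ∈ kSet Ω z v := by
  obtain ⟨n, c, hc0, hcn, hcm, rfl⟩ := h1
  obtain ⟨m, d, hd0, hdm, hdmem, rfl⟩ := h2
  refine ⟨n + m, fun i => if i ≤ n then c i else d (i - n), by simp [hc0], ?_, ?_, ?_⟩
  · rcases Nat.eq_zero_or_pos m with rfl | hm
    · simp [hcn, hd0, hdm.symm]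
    · have : ¬ (n + m ≤ n) := by omega
      simp only [this, if_false]
      simpa using hdm
  · intro i hi
    by_cases h : i ≤ n
    · simp only [h, if_true]; exact hcm i h
    · simp only [h, if_false]; exact hdmem (i - n) (by omega)
  · have key : ∀ i, (fun j => if j ≤ n then c j else d (j - n)) (n + i) = d i := by
      intro i
      rcases Nat.eq_zero_or_pos i with rfl | hi
      · simp [hcn, hd0]
      · have : ¬ (n + i ≤ n) := by omega
        simp [this]
    rw [Finset.sum_range_add]
    congr 1
    · apply Finset.sum_congr rfl
      intro i hi
      rw [Finset.mem_range] at hi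
      dsimp only
      rw [if_pos (Nat.le_of_lt hi), if_pos (by omega : i + 1 ≤ n)]
    · apply Finset.sum_congr rfl
      intro i hi
      dsimp only
      rcases Nat.eq_zero_or_pos i with rfl | hip
      · have e0 : n + 0 = n := by omega
        rw [if_pos (le_of_eq e0), if_neg (by omega), e0, hcn, hd0]
        have e2 : n + 0 + 1 - n = 0 + 1 := by omega
        rw [e2]
      · rw [if_neg (by omega), if_neg (by omega)]
        have e1 : n + i - n = i := by omega
        have e2 : n + i + 1 - n = i + 1 := by omega
        rw [e1, e2]

lemma kob_triangle {Ω : Set E} {z w v : E} (hz : z ∈ Ω) (hw : w ∈ Ω) (hv : v ∈ Ω) :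
    kobayashi Ω z v ≤ kobayashi Ω z w + kobayashi Ω w v := by
  have key : ∀ r1 ∈ kSet Ω z w, kobayashi Ω z v - r1 ≤ kobayashi Ω w v := by
    intro r1 h1
    refine le_csInf (kSet_nonempty hw hv) fun r2 h2 => ?_
    have := kob_le_of_mem (kSet_add h1 h2)
    linarith
  have : kobayashi Ω z v - kobayashi Ω w v ≤ kobayashi Ω z w := by
    refine le_csInf (kSet_nonempty hz hw) fun r1 h1 => ?_
    have := key r1 h1; linarith
  linarith

lemma kSet_symm_subset (Ω : Set E) (z w : E) : kSet Ω z w ⊆ kSet Ω w z := by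
  rintro r ⟨n, c, hc0, hcn, hcm, rfl⟩
  refine ⟨n, fun i => c (n - i), by simp [hcn], by simp [hc0], fun i hi => hcm _ (by omega), ?_⟩
  have := Finset.sum_range_reflect
    (fun j => poincareDist (lempert Ω (c (j+1)) (c j))) n
  calc ∑ i ∈ Finset.range n, poincareDist (lempert Ω (c i) (c (i+1)))
      = ∑ j ∈ Finset.range n, poincareDist (lempert Ω (c (j+1)) (c j)) := by
        apply Finset.sum_congr rfl; intro i _
        rw [lempert_symm]
    _ = ∑ i ∈ Finset.range n, poincareDist (lempert Ω (c (n-1-i+1)) (c (n-1-i))) := this.symm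
    _ = ∑ i ∈ Finset.range n, poincareDist (lempert Ω (c (n-i)) (c (n-(i+1)))) := by
        apply Finset.sum_congr rfl; intro i hi
        rw [Finset.mem_range] at hi
        have e1 : n - 1 - i + 1 = n - i := by omega
        have e2 : n - 1 - i = n - (i+1) := by omega
        rw [e1, e2]

lemma kob_symm (Ω : Set E) (z w : E) : kobayashi Ω z w = kobayashi Ω w z := by
  rw [kobayashi_eq, kobayashi_eq,
    Set.Subset.antisymm (kSet_symm_subset Ω z w) (kSet_symm_subset Ω w z)]

/-! ### Schwarz lemma wrapper -/

lemma schwarz_bound {f : ℂ → E} {σ M : ℝ} (hσ : 0 < σ) (hM : 0 ≤ M)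
    (hd : DifferentiableOn ℂ f (ball 0 σ)) (hb : ∀ t ∈ ball (0:ℂ) σ, ‖f t‖ ≤ M)
    {l : ℂ} (hl : l ∈ ball (0:ℂ) σ) : ‖f l - f 0‖ ≤ (2*M+1)/σ * ‖l‖ := by
  have hmaps : MapsTo f (ball 0 σ) (ball (f 0) (2*M+1)) := by
    intro t ht
    rw [mem_ball, dist_eq_norm]
    have h1 : ‖f t - f 0‖ ≤ ‖f t‖ + ‖f 0‖ := norm_sub_le _ _
    have h2 := hb t ht
    have h3 := hb 0 (mem_ball_self hσ)
    linarith
  have := Complex.dist_le_div_mul_dist_of_mapsTo_ball hd (hmaps.mono_right ball_subset_closedBall) hl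
  rwa [dist_eq_norm, dist_eq_norm, sub_zero] at this

/-! ### vector-valued Bernstein approximation -/

noncomputable def bc (n k : ℕ) (ζ : ℂ) : ℂ := (n.choose k : ℂ) * ζ^k * (1-ζ)^(n-k)

lemma bc_differentiable (n k : ℕ) : Differentiable ℂ (bc n k) := by
  unfold bc
  exact ((differentiable_const _).mul (differentiable_pow k)).mul
    (((differentiable_const _).sub differentiable_id).pow _)

lemma bc_real (n k : ℕ) {s : ℝ} (hs : s ∈ Set.Icc (0:ℝ) 1) :
    bc n k (s:ℂ) = (((bernstein n k ⟨s, hs⟩ : ℝ)) : ℂ) := by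
  rw [bernstein_apply]
  unfold bc
  push_cast
  ring

set_option maxHeartbeats 1000000 in
lemma bernstein_vec (g : ℝ → E) (hg : UniformContinuous g) {C : ℝ}
    (hC : ∀ s, ‖g s‖ ≤ C) {ε : ℝ} (hε : 0 < ε) :
    ∃ n : ℕ, 0 < n ∧ ∀ s : ℝ, s ∈ Set.Icc (0:ℝ) 1 →
      ‖(∑ k ∈ Finset.range (n+1), bc n k (s:ℂ) • g ((k:ℝ) / n)) - g s‖ ≤ ε := by
  obtain ⟨τ, hτ, hmod⟩ := Metric.uniformContinuous_iff.1 hg (ε/2) (by positivity)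
  have hC0 : 0 ≤ C := le_trans (norm_nonneg _) (hC 0)
  set B : ℝ := 2*C/τ^2 with hB
  have hB0 : 0 ≤ B := by positivity
  obtain ⟨n, hn⟩ := exists_nat_gt (B * (2/ε))
  refine ⟨n + 1, Nat.succ_pos n, ?_⟩
  set N := n + 1 with hN
  have hNpos : (0:ℝ) < N := by positivity
  have hBN : B / N ≤ ε/2 := by
    rw [div_le_iff₀ hNpos]
    have h1 : B * (2/ε) ≤ (N:ℝ) := by
      have : ((n:ℝ)) ≤ (N:ℝ) := by exact_mod_cast Nat.le_succ n
      linarith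
    calc B = (B * (2/ε)) * (ε/2) := by field_simp
    _ ≤ (N:ℝ) * (ε/2) := by nlinarith
    _ = ε/2 * N := by ring
  intro s hs
  set x : unitInterval := ⟨s, hs⟩ with hx
  set b : ℕ → ℝ := fun k => bernstein N k x with hbdef
  have hb0 : ∀ k, 0 ≤ b k := fun k => bernstein_nonneg
  have hprob : ∑ k ∈ Finset.range (N+1), b k = 1 := by
    have := bernstein.probability N x
    rwa [Fin.sum_univ_eq_sum_range (fun k => bernstein N k x) (N+1)] at this
  have hvar : ∑ k ∈ Finset.range (N+1), (s - (k:ℝ)/N)^2 * b k = s * (1-s) / N := by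
    simp only [hbdef]
    rw [← Fin.sum_univ_eq_sum_range (fun k => (s - (k:ℝ)/N)^2 * bernstein N k x) (N+1)]
    have h := bernstein.variance (n := N) (by omega) x
    simpa [bernstein.z] using h
  have hsum : (∑ k ∈ Finset.range (N+1), bc N k (s:ℂ) • g ((k:ℝ) / N)) - g s
      = ∑ k ∈ Finset.range (N+1), ((b k : ℝ) : ℂ) • (g ((k:ℝ)/N) - g s) := by
    have e1 : ∀ k ∈ Finset.range (N+1), bc N k (s:ℂ) • g ((k:ℝ)/N)
        = ((b k : ℝ) : ℂ) • g ((k:ℝ)/N) := by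
      intro k _; rw [bc_real N k hs]
    rw [Finset.sum_congr rfl e1]
    have e2 : g s = ∑ k ∈ Finset.range (N+1), ((b k : ℝ) : ℂ) • g s := by
      rw [← Finset.sum_smul]
      norm_cast
      rw [hprob, one_smul]
    calc (∑ k ∈ Finset.range (N+1), ((b k : ℝ) : ℂ) • g ((k:ℝ)/N)) - g s
        = (∑ k ∈ Finset.range (N+1), ((b k : ℝ) : ℂ) • g ((k:ℝ)/N))
          - ∑ k ∈ Finset.range (N+1), ((b k : ℝ) : ℂ) • g s := by rw [← e2]
      _ = ∑ k ∈ Finset.range (N+1), (((b k : ℝ) : ℂ) • g ((k:ℝ)/N) - ((b k : ℝ) : ℂ) • g s) := by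
          rw [Finset.sum_sub_distrib]
      _ = ∑ k ∈ Finset.range (N+1), ((b k : ℝ) : ℂ) • (g ((k:ℝ)/N) - g s) := by
          apply Finset.sum_congr rfl; intro k _; rw [smul_sub]
  rw [hsum]
  have hterm : ∀ k ∈ Finset.range (N+1),
      ‖((b k : ℝ) : ℂ) • (g ((k:ℝ)/N) - g s)‖
        ≤ b k * (ε/2) + B * ((s - (k:ℝ)/N)^2 * b k) := by
    intro k _
    rw [norm_smul]
    have habs : ‖((b k : ℝ) : ℂ)‖ = b k := by
      rw [Complex.norm_real, Real.norm_eq_abs, abs_of_nonneg (hb0 k)]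
    rw [habs]
    by_cases hnear : dist ((k:ℝ)/N) s < τ
    · have h1 : ‖g ((k:ℝ)/N) - g s‖ ≤ ε/2 := by
        have := hmod hnear
        rw [dist_eq_norm] at this
        linarith
      have h2 : 0 ≤ B * ((s - (k:ℝ)/N)^2 * b k) := by positivity
      nlinarith [hb0 k]
    · push_neg at hnear
      have h1 : ‖g ((k:ℝ)/N) - g s‖ ≤ 2*C := by
        have := norm_sub_le (g ((k:ℝ)/N)) (g s)
        have := hC ((k:ℝ)/N); have := hC s
        linarith
      have hτ2 : τ^2 ≤ (s - (k:ℝ)/N)^2 := by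
        rw [Real.dist_eq] at hnear
        have : |s - (k:ℝ)/N| = |(k:ℝ)/N - s| := abs_sub_comm _ _
        nlinarith [abs_nonneg ((k:ℝ)/N - s), sq_abs (s - (k:ℝ)/N), le_abs_self (s - (k:ℝ)/N)]
      have h2 : 2*C ≤ B * (s - (k:ℝ)/N)^2 := by
        rw [hB]
        rw [div_mul_eq_mul_div, le_div_iff₀ (by positivity)]
        nlinarith
      have h3 : 0 ≤ b k * (ε/2) := by positivity
      nlinarith [hb0 k]
  calc ‖∑ k ∈ Finset.range (N+1), ((b k : ℝ) : ℂ) • (g ((k:ℝ)/N) - g s)‖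
      ≤ ∑ k ∈ Finset.range (N+1), ‖((b k : ℝ) : ℂ) • (g ((k:ℝ)/N) - g s)‖ :=
        norm_sum_le _ _
    _ ≤ ∑ k ∈ Finset.range (N+1), (b k * (ε/2) + B * ((s - (k:ℝ)/N)^2 * b k)) :=
        Finset.sum_le_sum hterm
    _ = (∑ k ∈ Finset.range (N+1), b k) * (ε/2)
        + B * ∑ k ∈ Finset.range (N+1), (s - (k:ℝ)/N)^2 * b k := by
        rw [Finset.sum_add_distrib, ← Finset.sum_mul, ← Finset.mul_sum]
    _ = ε/2 + B * (s * (1-s)/N) := by rw [hprob, hvar, one_mul]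
    _ ≤ ε/2 + ε/2 := by
        have h1 : s * (1-s) ≤ 1 := by rcases hs with ⟨h1, h2⟩; nlinarith
        have h3 : s * (1-s)/N ≤ 1/N := by
          rw [div_le_div_iff₀ hNpos hNpos]; nlinarith
        have h2 : B * (s * (1-s)/N) ≤ B / N := by
          have := mul_le_mul_of_nonneg_left h3 hB0
          calc B * (s * (1-s)/N) ≤ B * (1/N) := this
            _ = B / N := by ring
        linarith [hBN]
    _ = ε := by ring

/-! ### the explicit holomorphic map from the disk to a neighborhood of `[0,1]` -/

lemma re_pos_of_ball {t : ℂ} (ht : t ∈ ball (0:ℂ) 1) :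
    (0:ℝ) < ((1+t)/(1-t)).re ∧ (1:ℂ) - t ≠ 0 := by
  rw [mem_ball_zero_iff] at ht
  have hden : (1:ℂ) - t ≠ 0 := by
    intro h
    have : t = 1 := by linear_combination -h
    rw [this] at ht; norm_num at ht
  have hns : 0 < Complex.normSq (1 - t) := Complex.normSq_pos.2 hden
  have hnt : Complex.normSq t < 1 := by
    have : Complex.normSq t = ‖t‖^2 := by rw [← Complex.sq_norm]
    rw [this]; nlinarith [norm_nonneg t]
  refine ⟨?_, hden⟩
  rw [Complex.div_re]
  have e : (1+t).re * (1-t).re / Complex.normSq (1-t)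
      + (1+t).im * (1-t).im / Complex.normSq (1-t)
      = (1 - Complex.normSq t) / Complex.normSq (1-t) := by
    rw [← add_div]
    congr 1
    simp only [Complex.add_re, Complex.add_im, Complex.sub_re, Complex.sub_im,
      Complex.one_re, Complex.one_im, Complex.normSq_apply]
    ring
  rw [e]
  exact div_pos (by linarith) hns

lemma conformal_strip {A : ℝ} (hA : 0 < A) (hA1 : A ≤ 1/6) :
    ∃ (h : ℂ → ℂ) (l : ℂ), DifferentiableOn ℂ h (ball 0 1) ∧ l ∈ ball (0:ℂ) 1 ∧
      h 0 = 0 ∧ h l = 1 ∧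
      ∀ t ∈ ball (0:ℂ) 1, ∃ s : ℝ, s ∈ Set.Icc (0:ℝ) 1 ∧ ‖h t - (s:ℂ)‖ ≤ 3*A := by
  set q : ℂ → ℂ := fun t => (1+t)/(1-t) with hq
  set w : ℂ → ℂ := fun t => (A:ℂ) * Complex.log (q t) with hw
  set h : ℂ → ℂ := fun t => (1 - Complex.cos (w t))/2 with hh
  set c : ℝ := Real.pi / (2*A) with hc
  have hcpos : 0 < c := by rw [hc]; exact div_pos Real.pi_pos (by linarith)
  set th : ℝ := Real.tanh c with hth
  have hchpos : 0 < Real.cosh c := Real.cosh_pos c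
  have hth0 : 0 ≤ th := by
    rw [hth, Real.tanh_eq_sinh_div_cosh]
    have hs : 0 ≤ Real.sinh c := Real.sinh_nonneg_iff.2 (le_of_lt hcpos)
    exact div_nonneg hs (le_of_lt hchpos)
  have hth1 : th < 1 := by
    rw [hth, Real.tanh_eq_sinh_div_cosh, div_lt_one hchpos]
    nlinarith [Real.cosh_sub_sinh c, Real.exp_pos (-c)]
  set l : ℂ := ((th : ℝ) : ℂ) with hl
  have hlmem : l ∈ ball (0:ℂ) 1 := by
    rw [mem_ball_zero_iff, hl, Complex.norm_real, Real.norm_eq_abs, abs_of_nonneg hth0]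
    exact hth1
  refine ⟨h, l, ?_, hlmem, ?_, ?_, ?_⟩
  -- differentiability
  · intro t ht
    obtain ⟨hre, hden⟩ := re_pos_of_ball ht
    have hqd : DifferentiableAt ℂ q t := by
      apply DifferentiableAt.div
      · exact (differentiableAt_const _).add differentiableAt_id
      · exact (differentiableAt_const _).sub differentiableAt_id
      · exact hden
    have hslit : q t ∈ Complex.slitPlane := Complex.mem_slitPlane_iff.2 (Or.inl hre)
    have hlogd : DifferentiableAt ℂ (fun s => Complex.log (q s)) t :=
      (Complex.differentiableAt_log hslit).comp t hqd
    have hwd : DifferentiableAt ℂ w t := (differentiableAt_const _).mul hlogd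
    have hcosd : DifferentiableAt ℂ (fun s => Complex.cos (w s)) t :=
      Complex.differentiable_cos.differentiableAt.comp t hwd
    exact (((differentiableAt_const _).sub hcosd).div_const 2).differentiableWithinAt
  -- h 0 = 0
  · have : q 0 = 1 := by rw [hq]; norm_num
    rw [hh]
    dsimp only
    rw [hw]
    dsimp only
    rw [this, Complex.log_one, mul_zero, Complex.cos_zero]
    norm_num
  -- h l = 1
  · have hne : (1:ℝ) - th ≠ 0 := by linarith
    have hql : q l = (((1+th)/(1-th) : ℝ) : ℂ) := by
      rw [hq]; dsimp only; rw [hl]; push_cast; ring_nf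
    have hratio : (1+th)/(1-th) = Real.exp (2*c) := by
      have e1 : 1 + th = Real.exp c / Real.cosh c := by
        rw [hth, Real.tanh_eq_sinh_div_cosh, ← Real.cosh_add_sinh c]
        field_simp
      have e2 : 1 - th = Real.exp (-c) / Real.cosh c := by
        rw [hth, Real.tanh_eq_sinh_div_cosh, ← Real.cosh_sub_sinh c]
        field_simp
      rw [e1, e2]
      have e3 : Real.exp c / Real.cosh c / (Real.exp (-c) / Real.cosh c)
          = Real.exp c / Real.exp (-c) := by
        rw [div_div_div_comm, div_self (ne_of_gt hchpos), div_one]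
      rw [e3, ← Real.exp_sub]
      congr 1; ring
    have hlog : Complex.log (q l) = ((2*c : ℝ) : ℂ) := by
      rw [hql, ← Complex.ofReal_log (div_nonneg (by linarith) (by linarith) : (0:ℝ) ≤ (1+th)/(1-th)), hratio,
        Real.log_exp]
    have hwl : w l = ((Real.pi : ℝ) : ℂ) := by
      rw [hw]; dsimp only; rw [hlog]
      rw [← Complex.ofReal_mul]
      congr 1
      rw [hc]; field_simp
    rw [hh]; dsimp only
    rw [hwl, ← Complex.ofReal_cos, Real.cos_pi]
    norm_num
  -- the image estimate
  · intro t ht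
    obtain ⟨hre, hden⟩ := re_pos_of_ball ht
    set x : ℝ := (w t).re with hx
    set y : ℝ := (w t).im with hy
    have harg : |Complex.arg (q t)| < Real.pi / 2 :=
      Complex.abs_arg_lt_pi_div_two_iff.2 (Or.inl hre)
    have hyval : y = A * Complex.arg (q t) := by
      rw [hy, hw]; dsimp only
      simp [Complex.mul_im, Complex.log_im]
    have hyb : |y| ≤ 2*A := by
      rw [hyval, abs_mul, abs_of_pos hA]
      have : |Complex.arg (q t)| ≤ 2 := by
        have := Real.pi_le_four; linarith
      nlinarith
    have hy1 : |y| ≤ 1 := by linarith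
    -- the estimate on cos
    have hdecomp : Complex.cos (w t) - ((Real.cos x : ℝ) : ℂ)
        = ((Real.cos x : ℝ) : ℂ) * (((Real.cosh y : ℝ) : ℂ) - 1)
          - ((Real.sin x : ℝ) : ℂ) * ((Real.sinh y : ℝ) : ℂ) * Complex.I := by
      have e0 : w t = (x:ℂ) + (y:ℂ) * Complex.I := (Complex.re_add_im (w t)).symm
      rw [e0, Complex.cos_add, Complex.cos_mul_I, Complex.sin_mul_I,
        ← Complex.ofReal_cos, ← Complex.ofReal_sin, ← Complex.ofReal_cosh,
        ← Complex.ofReal_sinh]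
      ring
    have hnorm : ‖Complex.cos (w t) - ((Real.cos x : ℝ) : ℂ)‖
        ≤ (Real.cosh y - 1) + |Real.sinh y| := by
      rw [hdecomp]
      have h1 : ‖((Real.cos x : ℝ) : ℂ) * (((Real.cosh y : ℝ) : ℂ) - 1)‖
          ≤ Real.cosh y - 1 := by
        rw [norm_mul]
        have e1 : (((Real.cosh y : ℝ) : ℂ) - 1) = ((Real.cosh y - 1 : ℝ) : ℂ) := by push_cast; ring
        rw [e1, Complex.norm_real, Complex.norm_real, Real.norm_eq_abs, Real.norm_eq_abs,
          abs_of_nonneg (show (0:ℝ) ≤ Real.cosh y - 1 by linarith [Real.one_le_cosh y])]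
        nlinarith [Real.abs_cos_le_one x, abs_nonneg (Real.cos x), Real.one_le_cosh y]
      have h2 : ‖((Real.sin x : ℝ) : ℂ) * ((Real.sinh y : ℝ) : ℂ) * Complex.I‖
          ≤ |Real.sinh y| := by
        rw [norm_mul, norm_mul, Complex.norm_I, mul_one, Complex.norm_real, Complex.norm_real,
          Real.norm_eq_abs, Real.norm_eq_abs]
        nlinarith [Real.abs_sin_le_one x, abs_nonneg (Real.sin x), abs_nonneg (Real.sinh y)]
      calc ‖_ - _‖ ≤ _ := norm_sub_le _ _
        _ ≤ (Real.cosh y - 1) + |Real.sinh y| := by linarith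
    have hbound : (Real.cosh y - 1) + |Real.sinh y| ≤ 6*A := by
      have hd1 : 2*A ≤ 1 := by linarith
      have hd0 : (0:ℝ) < 2*A := by linarith
      have hcy : Real.cosh y ≤ Real.cosh (2*A) := by
        rw [Real.cosh_le_cosh, abs_of_pos hd0]; exact hyb
      have hsy : |Real.sinh y| ≤ Real.sinh (2*A) := by
        rw [Real.abs_sinh]; exact Real.sinh_le_sinh.2 hyb
      have hexp : Real.cosh (2*A) + Real.sinh (2*A) = Real.exp (2*A) := Real.cosh_add_sinh _
      have k1 : 1 - 2*A ≤ Real.exp (-(2*A)) := by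
        have := Real.add_one_le_exp (-(2*A)); linarith
      have k2 : Real.exp (2*A) * Real.exp (-(2*A)) = 1 := by rw [← Real.exp_add]; simp
      have k3 : Real.exp (2*A) ≤ 3 := by
        calc Real.exp (2*A) ≤ Real.exp 1 := Real.exp_le_exp.2 hd1
          _ ≤ 3 := by nlinarith [Real.exp_one_lt_d9]
      nlinarith [Real.exp_pos (2*A),
        mul_le_mul_of_nonneg_left k1 (le_of_lt (Real.exp_pos (2*A)))]
    refine ⟨(1 - Real.cos x)/2, ?_, ?_⟩
    · constructor
      · nlinarith [Real.cos_le_one x]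
      · nlinarith [Real.neg_one_le_cos x]
    · rw [hh]; dsimp only
      have e : (1 - Complex.cos (w t))/2 - (((1 - Real.cos x)/2 : ℝ) : ℂ)
          = -(Complex.cos (w t) - ((Real.cos x : ℝ) : ℂ))/2 := by push_cast; ring
      rw [e]
      rw [norm_div, norm_neg]
      have : ‖(2:ℂ)‖ = 2 := by norm_num
      rw [this]
      linarith

/-! ### existence of an analytic disk through two points of a domain -/

lemma exists_disk {Ω : Set E} (hΩo : IsOpen Ω) (hΩc : IsConnected Ω)
    {u v : E} (hu : u ∈ Ω) (hv : v ∈ Ω) :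
    ∃ (f : ℂ → E) (l : ℂ), DifferentiableOn ℂ f (ball 0 1) ∧ MapsTo f (ball 0 1) Ω ∧
      f 0 = u ∧ f l = v ∧ l ∈ ball (0:ℂ) 1 := by
  classical
  -- a path from u to v inside Ω
  have hpc : IsPathConnected Ω := (hΩo.isConnected_iff_isPathConnected).1 hΩc
  obtain ⟨γ, hγ⟩ := hpc.joinedIn u hu v hv
  set g : ℝ → E := ⇑γ.extend with hgdef
  have hg0 : g 0 = u := γ.extend_zero
  have hg1 : g 1 = v := γ.extend_one
  have hgK : ∀ s : ℝ, g s ∈ Set.range (γ : unitInterval → E) := by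
    intro s; exact ⟨_, rfl⟩
  have hK : IsCompact (Set.range (γ : unitInterval → E)) := isCompact_range γ.continuous
  have hKΩ : Set.range (γ : unitInterval → E) ⊆ Ω := by
    rintro _ ⟨s, rfl⟩; exact hγ s
  obtain ⟨δ, hδ, hth⟩ := hK.exists_thickening_subset_open hΩo hKΩ
  have hΩmem : ∀ x ∈ Set.range (γ : unitInterval → E), ∀ y : E, ‖y - x‖ < δ → y ∈ Ω := by
    intro x hx y hy
    apply hth
    rw [Metric.mem_thickening_iff]
    exact ⟨x, hx, by rwa [dist_eq_norm]⟩
  -- uniform continuity and boundedness of g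
  have hgUC : UniformContinuous g := by
    have : g = (γ : unitInterval → E) ∘ Set.projIcc 0 1 zero_le_one := rfl
    rw [this]
    exact (CompactSpace.uniformContinuous_of_continuous γ.continuous).comp
      (LipschitzWith.projIcc zero_le_one).uniformContinuous
  obtain ⟨C, hC⟩ := hK.isBounded.exists_norm_le
  have hC' : ∀ s : ℝ, ‖g s‖ ≤ C := fun s => hC _ (hgK s)
  -- the Bernstein polynomial approximating g
  obtain ⟨N, hNpos, happrox⟩ := bernstein_vec g hgUC hC' (ε := δ/4) (by positivity)
  set P : ℂ → E := fun ζ => ∑ k ∈ Finset.range (N+1), bc N k ζ • g ((k:ℝ)/N) with hP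
  have hPdiff : Differentiable ℂ P := by
    apply Differentiable.fun_sum
    intro k _
    exact (bc_differentiable N k).smul_const _
  have hP0 : P 0 = u := by
    rw [hP]
    dsimp only
    rw [Finset.sum_eq_single_of_mem 0 (Finset.mem_range.2 (by omega))]
    · have e : bc N 0 0 = 1 := by simp [bc]
      rw [e, one_smul]
      norm_num [hg0]
    · intro k _ hk
      have e : bc N k 0 = 0 := by simp [bc, zero_pow hk]
      rw [e, zero_smul]
  have hP1 : P 1 = v := by
    rw [hP]
    dsimp only
    rw [Finset.sum_eq_single_of_mem N (Finset.mem_range.2 (by omega))]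
    · have e : bc N N 1 = 1 := by simp [bc]
      rw [e, one_smul]
      have : ((N:ℝ))/N = 1 := by
        field_simp
      rw [this, hg1]
    · intro k hk hkN
      rw [Finset.mem_range] at hk
      have e : bc N k 1 = 0 := by
        have : N - k ≠ 0 := by omega
        simp [bc, zero_pow this]
      rw [e, zero_smul]
  -- uniform continuity of P near [0,1]
  have hPuc : UniformContinuousOn P (closedBall 0 4) :=
    (isCompact_closedBall (0:ℂ) 4).uniformContinuousOn_of_continuous
      hPdiff.continuous.continuousOn
  obtain ⟨d, hd, hmodP⟩ := (Metric.uniformContinuousOn_iff.1 hPuc) (δ/4) (by positivity)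
  set η : ℝ := min (d/3) (1/2) with hη
  have hηpos : 0 < η := lt_min (by linarith) (by norm_num)
  have hPclose : ∀ ζ : ℂ, ∀ s : ℝ, s ∈ Set.Icc (0:ℝ) 1 → ‖ζ - (s:ℂ)‖ ≤ 2*η →
      ‖P ζ - P (s:ℂ)‖ ≤ δ/4 := by
    intro ζ s hs hζs
    have hη1 : 2*η ≤ 1 := by
      have : η ≤ 1/2 := min_le_right _ _
      linarith
    have hsnorm : ‖(s:ℂ)‖ ≤ 1 := by
      rw [Complex.norm_real, Real.norm_eq_abs, abs_of_nonneg hs.1]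
      exact hs.2
    have hζmem : ζ ∈ closedBall (0:ℂ) 4 := by
      rw [mem_closedBall_zero_iff]
      have e : ζ = (ζ - (s:ℂ)) + (s:ℂ) := by ring
      calc ‖ζ‖ = ‖(ζ - (s:ℂ)) + (s:ℂ)‖ := by rw [← e]
        _ ≤ ‖ζ - (s:ℂ)‖ + ‖(s:ℂ)‖ := norm_add_le _ _
        _ ≤ 1 + 1 := by linarith
        _ ≤ 4 := by norm_num
    have hsmem : (s:ℂ) ∈ closedBall (0:ℂ) 4 := by
      rw [mem_closedBall_zero_iff]; linarith
    have hdist : dist ζ (s:ℂ) < d := by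
      rw [dist_eq_norm]
      have : η ≤ d/3 := min_le_left _ _
      calc ‖ζ - (s:ℂ)‖ ≤ 2*η := hζs
        _ ≤ 2*(d/3) := by linarith
        _ < d := by linarith
    have := hmodP ζ hζmem (s:ℂ) hsmem hdist
    rw [dist_eq_norm] at this
    linarith
  -- the conformal map
  set A : ℝ := min (η/2) (1/6) with hA
  have hApos : 0 < A := lt_min (by linarith) (by norm_num)
  have hA16 : A ≤ 1/6 := min_le_right _ _
  have hA2η : 3*A ≤ 2*η := by
    have : A ≤ η/2 := min_le_left _ _
    linarith
  obtain ⟨h, l, hhd, hlmem, hh0, hhl, hhest⟩ := conformal_strip hApos hA16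
  refine ⟨P ∘ h, l, hPdiff.comp_differentiableOn hhd, ?_, ?_, ?_, hlmem⟩
  · intro t ht
    obtain ⟨s, hs, hclose⟩ := hhest t ht
    have h1 : ‖P (h t) - P (s:ℂ)‖ ≤ δ/4 := hPclose (h t) s hs (le_trans hclose hA2η)
    have h2 : ‖P (s:ℂ) - g s‖ ≤ δ/4 := happrox s hs
    have h3 : ‖(P ∘ h) t - g s‖ < δ := by
      have := norm_sub_le (P (h t) - P (s:ℂ)) (-(P (s:ℂ) - g s))
      have e : (P ∘ h) t - g s = (P (h t) - P (s:ℂ)) + (P (s:ℂ) - g s) := by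
        simp [Function.comp]
      rw [e]
      calc ‖(P (h t) - P (s:ℂ)) + (P (s:ℂ) - g s)‖
          ≤ ‖P (h t) - P (s:ℂ)‖ + ‖P (s:ℂ) - g s‖ := norm_add_le _ _
        _ ≤ δ/4 + δ/4 := by linarith
        _ < δ := by linarith
    exact hΩmem (g s) (hgK s) _ h3
  · show P (h 0) = u
    rw [hh0, hP0]
  · show P (h l) = v
    rw [hhl, hP1]

/-! ### the linear disk estimate and continuity of `kobayashi` -/

lemma lempert_le_linear {Ω : Set E} {z w : E} {ρ : ℝ} (hρ : 0 < ρ)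
    (hball : ball z ρ ⊆ Ω) (hw : ‖w - z‖ < ρ) :
    lempert Ω z w ≤ ‖w - z‖ / ρ := by
  rcases eq_or_ne w z with rfl | hne
  · have : (0:ℝ) ≤ ‖w - w‖ / ρ := by positivity
    refine le_trans (lempert_le_of_mem ?_) this
    refine ⟨fun _ => w, 0, differentiableOn_const _, ?_, rfl, rfl,
      mem_ball_self one_pos, by simp⟩
    intro t _; exact hball (mem_ball_self hρ)
  · have hd0 : 0 < ‖w - z‖ := norm_sub_pos_iff.2 hne
    apply lempert_le_of_mem
    refine ⟨fun t => z + (t * ((ρ:ℂ)/((‖w - z‖:ℝ):ℂ))) • (w - z), ((‖w - z‖/ρ : ℝ) : ℂ),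
      ?_, ?_, by simp, ?_, ?_, ?_⟩
    · apply Differentiable.differentiableOn
      exact (differentiable_const z).add
        ((differentiable_id.mul_const _).smul_const (w - z))
    · intro t ht
      rw [mem_ball_zero_iff] at ht
      apply hball
      rw [mem_ball, dist_eq_norm]
      have e : z + (t * ((ρ:ℂ)/((‖w - z‖:ℝ):ℂ))) • (w - z) - z
          = (t * ((ρ:ℂ)/((‖w - z‖:ℝ):ℂ))) • (w - z) := by rw [add_sub_cancel_left]
      have hns : ‖t * ((ρ:ℂ)/((‖w - z‖:ℝ):ℂ))‖ = ‖t‖ * (ρ/‖w - z‖) := by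
        rw [norm_mul, norm_div, Complex.norm_real, Complex.norm_real, Real.norm_eq_abs,
          Real.norm_eq_abs, abs_of_pos hρ, abs_of_pos hd0]
      rw [e, norm_smul, hns]
      calc ‖t‖ * (ρ / ‖w - z‖) * ‖w - z‖ = ‖t‖ * ρ := by field_simp
        _ < 1 * ρ := mul_lt_mul_of_pos_right ht hρ
        _ = ρ := one_mul ρ
    · have hρne : (ρ:ℂ) ≠ 0 := by exact_mod_cast ne_of_gt hρ
      have hdne : ((‖w - z‖:ℝ):ℂ) ≠ 0 := by exact_mod_cast ne_of_gt hd0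
      have e : (((‖w - z‖/ρ : ℝ) : ℂ) * ((ρ:ℂ)/((‖w - z‖:ℝ):ℂ))) = 1 := by
        rw [Complex.ofReal_div, div_mul_div_comm, mul_comm ((‖w - z‖:ℝ):ℂ) (ρ:ℂ)]
        exact div_self (mul_ne_zero hρne hdne)
      show z + ((((‖w - z‖/ρ : ℝ) : ℂ)) * ((ρ:ℂ)/((‖w - z‖:ℝ):ℂ))) • (w - z) = w
      rw [e, one_smul]
      abel
    · rw [mem_ball_zero_iff, Complex.norm_real, Real.norm_eq_abs,
        abs_of_nonneg (by positivity)]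
      rw [div_lt_one hρ]
      exact hw
    · rw [Complex.norm_real, Real.norm_eq_abs, abs_of_nonneg (by positivity)]

lemma kob_continuity {Ω : Set E} (hΩo : IsOpen Ω) {z : E} (hz : z ∈ Ω) {ε : ℝ} (hε : 0 < ε) :
    ∃ δ > 0, ∀ w ∈ Ω, ‖w - z‖ < δ → kobayashi Ω z w < ε := by
  obtain ⟨ρ, hρ, hball⟩ := Metric.isOpen_iff.1 hΩo z hz
  refine ⟨min (ρ/2) (ρ*ε/8), by positivity, ?_⟩
  intro w hw hwz
  have h1 : ‖w - z‖ < ρ/2 := lt_of_lt_of_le hwz (min_le_left _ _)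
  have h2 : ‖w - z‖ < ρ*ε/8 := lt_of_lt_of_le hwz (min_le_right _ _)
  have hle : lempert Ω z w ≤ ‖w - z‖/ρ := lempert_le_linear hρ hball (by linarith)
  have hlt1 : ‖w - z‖/ρ ≤ 1/2 := by rw [div_le_iff₀ hρ]; linarith
  have h3 : kobayashi Ω z w ≤ poincareDist (lempert Ω z w) := kob_le_pd hz hw
  have h4 : poincareDist (lempert Ω z w) ≤ poincareDist (‖w - z‖/ρ) :=
    pd_mono (lempert_nonneg Ω z w) hle (by linarith)
  have h5 : poincareDist (‖w - z‖/ρ) ≤ 2*(‖w - z‖/ρ) := pd_le (by positivity) hlt1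
  have h7 : ‖w - z‖/ρ < ε/8 := by
    rw [div_lt_iff₀ hρ]
    nlinarith
  linarith

/-! ### the escape lemma -/

lemma escape {Ω : Set E} (hΩo : IsOpen Ω) (hΩc : IsConnected Ω) {a : E} (ha : a ∈ Ω)
    {ε : ℝ} (hε : 0 < ε)
    (H : ∀ δ > 0, ∃ w ∈ Ω, kobayashi Ω a w < δ ∧ ε ≤ ‖w - a‖) :
    ∀ η > 0, ∀ R : ℝ, 0 < R → ∃ q ∈ Ω, R ≤ ‖q‖ ∧ kobayashi Ω a q < η := by
  intro η hη R hR
  classical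
  set σ : ℝ := min (1/4) (η/8) with hσdef
  have hσpos : 0 < σ := lt_min (by norm_num) (by linarith)
  have hσ14 : σ ≤ 1/4 := min_le_left _ _
  have hση : σ ≤ η/8 := min_le_right _ _
  set δ' : ℝ := min (min (η/4) (σ/8)) (σ*ε/(6*(2*R+1))) with hδ'def
  have hδ'pos : 0 < δ' :=
    lt_min (lt_min (by linarith) (by linarith)) (by positivity)
  have hδ'η : δ' ≤ η/4 := le_trans (min_le_left _ _) (min_le_left _ _)
  have hδ'σ : δ' ≤ σ/8 := le_trans (min_le_left _ _) (min_le_right _ _)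
  have hδ'ε : δ' ≤ σ*ε/(6*(2*R+1)) := min_le_right _ _
  obtain ⟨w, hw, hkw, hεw⟩ := H δ' hδ'pos
  obtain ⟨n, c, hc0, hcn, hcm, hsum⟩ := exists_chain_of_lt ha hw hkw
  -- choose a near-optimal analytic disk for each step of the chain
  have hdisk : ∀ i : ℕ, ∃ fl : (ℂ → E) × ℂ, i < n →
      DifferentiableOn ℂ fl.1 (ball 0 1) ∧ MapsTo fl.1 (ball 0 1) Ω ∧
      fl.1 0 = c i ∧ fl.1 fl.2 = c (i+1) ∧ fl.2 ∈ ball (0:ℂ) 1 ∧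
      ‖fl.2‖ < lempert Ω (c i) (c (i+1)) + δ'/(n+1) := by
    intro i
    by_cases hi : i < n
    · have hne : (lSet Ω (c i) (c (i+1))).Nonempty := by
        obtain ⟨f, l, h1, h2, h3, h4, h5⟩ :=
          exists_disk hΩo hΩc (hcm i (by omega)) (hcm (i+1) (by omega))
        exact ⟨‖l‖, f, l, h1, h2, h3, h4, h5, rfl⟩
      obtain ⟨r, hr, hrlt⟩ := Real.lt_sInf_add_pos hne
        (by positivity : (0:ℝ) < δ'/(n+1))
      obtain ⟨f, l, h1, h2, h3, h4, h5, rfl⟩ := hr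
      rw [← lempert_eq] at hrlt
      exact ⟨(f, l), fun _ => ⟨h1, h2, h3, h4, h5, hrlt⟩⟩
    · exact ⟨(fun _ => a, 0), fun h => absurd h hi⟩
  choose FL hFL using hdisk
  -- basic estimates on the steps
  have hpd_nonneg : ∀ i ∈ Finset.range n,
      0 ≤ poincareDist (lempert Ω (c i) (c (i+1))) := fun i _ =>
    pd_nonneg (lempert_nonneg Ω _ _) (lempert_lt_one Ω _ _)
  have hpd_le : ∀ i, i < n → poincareDist (lempert Ω (c i) (c (i+1))) < δ' := by
    intro i hi
    have h1 : poincareDist (lempert Ω (c i) (c (i+1)))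
        ≤ ∑ j ∈ Finset.range n, poincareDist (lempert Ω (c j) (c (j+1))) :=
      Finset.single_le_sum hpd_nonneg (Finset.mem_range.2 hi)
    linarith
  have hlem_le : ∀ i, i < n → lempert Ω (c i) (c (i+1))
      ≤ 2 * poincareDist (lempert Ω (c i) (c (i+1))) := by
    intro i hi
    have := half_le_pd (lempert_nonneg Ω (c i) (c (i+1))) (lempert_lt_one Ω (c i) (c (i+1)))
    linarith
  have hl_small : ∀ i, i < n → ‖(FL i).2‖ < 3*δ' := by
    intro i hi
    have h1 := (hFL i hi).2.2.2.2.2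
    have h2 := hlem_le i hi
    have h3 := hpd_le i hi
    have h4 : δ'/(n+1) ≤ δ' := by
      rw [div_le_iff₀ (by positivity)]
      nlinarith [hδ'pos]
    linarith
  have hl_lt_σ : ∀ i, i < n → (FL i).2 ∈ ball (0:ℂ) σ := by
    intro i hi
    rw [mem_ball_zero_iff]
    have := hl_small i hi
    linarith [hδ'σ]
  by_cases hcase : ∃ i, i < n ∧ ∃ t ∈ ball (0:ℂ) σ, R ≤ ‖(FL i).1 t‖
  · -- escape: some disk reaches far away at small hyperbolic distance
    obtain ⟨i, hi, t, ht, hRt⟩ := hcase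
    obtain ⟨hfd, hfm, hf0, hfl, hfball, hflen⟩ := hFL i hi
    have htmem : t ∈ ball (0:ℂ) 1 := by
      rw [mem_ball_zero_iff] at ht ⊢
      linarith [hσ14]
    set q : E := (FL i).1 t with hqdef
    have hqΩ : q ∈ Ω := hfm htmem
    have hciΩ : c i ∈ Ω := hcm i (by omega)
    refine ⟨q, hqΩ, hRt, ?_⟩
    have hlemq : lempert Ω (c i) q ≤ ‖t‖ :=
      lempert_le_of_mem ⟨(FL i).1, t, hfd, hfm, hf0, rfl, htmem, rfl⟩
    have hkciq : kobayashi Ω (c i) q ≤ poincareDist σ := by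
      refine le_trans (kob_le_pd hciΩ hqΩ) (pd_mono (lempert_nonneg Ω _ _) ?_ (by linarith))
      rw [mem_ball_zero_iff] at ht
      linarith
    have hpdσ : poincareDist σ ≤ 2*σ := pd_le (le_of_lt hσpos) (by linarith)
    have hkaci : kobayashi Ω a (c i) < δ' := by
      have hmem : (∑ j ∈ Finset.range i, poincareDist (lempert Ω (c j) (c (j+1))))
          ∈ kSet Ω a (c i) :=
        ⟨i, c, hc0, rfl, fun j hj => hcm j (by omega), rfl⟩
      have h1 := kob_le_of_mem hmem
      have h2 : (∑ j ∈ Finset.range i, poincareDist (lempert Ω (c j) (c (j+1))))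
          ≤ ∑ j ∈ Finset.range n, poincareDist (lempert Ω (c j) (c (j+1))) := by
        apply Finset.sum_le_sum_of_subset_of_nonneg
        · exact Finset.range_subset_range.2 (by omega)
        · intro j hj _; exact hpd_nonneg j hj
      linarith
    have htri : kobayashi Ω a q ≤ kobayashi Ω a (c i) + kobayashi Ω (c i) q :=
      kob_triangle ha hciΩ hqΩ
    calc kobayashi Ω a q ≤ kobayashi Ω a (c i) + kobayashi Ω (c i) q := htri
      _ < δ' + 2*σ := by linarith
      _ ≤ η/4 + 2*(η/8) := by linarith
      _ < η := by linarith
  · -- no escape: contradiction with `ε ≤ ‖w - a‖`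
    exfalso
    push_neg at hcase
    have hbound : ∀ i, i < n → ‖c (i+1) - c i‖ ≤ (2*R+1)/σ * ‖(FL i).2‖ := by
      intro i hi
      obtain ⟨hfd, hfm, hf0, hfl, hfball, hflen⟩ := hFL i hi
      have hb : ∀ t ∈ ball (0:ℂ) σ, ‖(FL i).1 t‖ ≤ R := by
        intro t ht; exact le_of_lt (hcase i hi t ht)
      have hdiff : DifferentiableOn ℂ (FL i).1 (ball 0 σ) :=
        hfd.mono (ball_subset_ball (by linarith))
      have := schwarz_bound hσpos (le_of_lt hR) hdiff hb (hl_lt_σ i hi)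
      rw [hf0, hfl] at this
      exact this
    have htele : ‖w - a‖ ≤ ∑ i ∈ Finset.range n, ‖c (i+1) - c i‖ := by
      have e : w - a = ∑ i ∈ Finset.range n, (c (i+1) - c i) := by
        rw [Finset.sum_range_sub c n, hc0, hcn]
      rw [e]
      exact norm_sum_le _ _
    have hsuml : ∑ i ∈ Finset.range n, ‖(FL i).2‖ ≤ 3*δ' := by
      have h1 : ∀ i ∈ Finset.range n, ‖(FL i).2‖
          ≤ 2 * poincareDist (lempert Ω (c i) (c (i+1))) + δ'/(n+1) := by
        intro i hi
        rw [Finset.mem_range] at hi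
        have := (hFL i hi).2.2.2.2.2
        have := hlem_le i hi
        linarith
      calc ∑ i ∈ Finset.range n, ‖(FL i).2‖
          ≤ ∑ i ∈ Finset.range n,
            (2 * poincareDist (lempert Ω (c i) (c (i+1))) + δ'/(n+1)) :=
            Finset.sum_le_sum h1
        _ = 2 * (∑ i ∈ Finset.range n, poincareDist (lempert Ω (c i) (c (i+1))))
            + n * (δ'/(n+1)) := by
            rw [Finset.sum_add_distrib, ← Finset.mul_sum, Finset.sum_const, Finset.card_range]
            ring
        _ ≤ 2*δ' + δ' := by
            have h2 : (n:ℝ) * (δ'/(n+1)) ≤ δ' := by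
              rw [mul_div_assoc', div_le_iff₀ (by positivity : (0:ℝ) < (n:ℝ)+1)]
              nlinarith [hδ'pos, Nat.cast_nonneg (α := ℝ) n]
            linarith
        _ = 3*δ' := by ring
    have hfinal : ‖w - a‖ ≤ (2*R+1)/σ * (3*δ') := by
      calc ‖w - a‖ ≤ ∑ i ∈ Finset.range n, ‖c (i+1) - c i‖ := htele
        _ ≤ ∑ i ∈ Finset.range n, (2*R+1)/σ * ‖(FL i).2‖ := by
            apply Finset.sum_le_sum
            intro i hi
            exact hbound i (Finset.mem_range.1 hi)
        _ = (2*R+1)/σ * ∑ i ∈ Finset.range n, ‖(FL i).2‖ := by rw [← Finset.mul_sum]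
        _ ≤ (2*R+1)/σ * (3*δ') := by
            apply mul_le_mul_of_nonneg_left hsuml
            positivity
    have hhalf : (2*R+1)/σ * (3*δ') ≤ ε/2 := by
      have h1 : (2*R+1)/σ * (3*δ') ≤ (2*R+1)/σ * (3*(σ*ε/(6*(2*R+1)))) := by
        apply mul_le_mul_of_nonneg_left (by linarith) (by positivity)
      have h2 : (2*R+1)/σ * (3*(σ*ε/(6*(2*R+1)))) = ε/2 := by
        field_simp
        ring
      linarith
    linarith

lemma no_degeneracy {Ω : Set E} (hΩo : IsOpen Ω) (hΩc : IsConnected Ω)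
    (hkp : KPrimeAt Ω (atInfFilter E)) {a : E} (ha : a ∈ Ω) {ε : ℝ} (hε : 0 < ε)
    (H : ∀ δ > 0, ∃ w ∈ Ω, kobayashi Ω a w < δ ∧ ε ≤ ‖w - a‖) : False := by
  have hesc := escape hΩo hΩc ha hε H
  have hex : ∀ m : ℕ, ∃ q ∈ Ω, ((m:ℝ)+1) ≤ ‖q‖ ∧ kobayashi Ω a q < 1/((m:ℝ)+1) :=
    fun m => hesc (1/((m:ℝ)+1)) (by positivity) ((m:ℝ)+1) (by positivity)
  choose x hxΩ hxnorm hxkob using hex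
  apply hkp
  refine ⟨x, hxΩ, ?_, ?_⟩
  · intro ε' hε'
    obtain ⟨N, hN⟩ := exists_nat_gt (2/ε')
    refine ⟨N, fun m hm n hn => ?_⟩
    have h1 : kobayashi Ω (x m) (x n) ≤ kobayashi Ω (x m) a + kobayashi Ω a (x n) :=
      kob_triangle (hxΩ m) ha (hxΩ n)
    have h2 : kobayashi Ω (x m) a = kobayashi Ω a (x m) := kob_symm Ω _ _
    have h3 : kobayashi Ω a (x m) < 1/((m:ℝ)+1) := hxkob m
    have h4 : kobayashi Ω a (x n) < 1/((n:ℝ)+1) := hxkob n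
    have hm' : (N:ℝ) ≤ (m:ℝ) := Nat.cast_le.2 hm
    have hn' : (N:ℝ) ≤ (n:ℝ) := Nat.cast_le.2 hn
    have h5 : 1/((m:ℝ)+1) ≤ 1/((N:ℝ)+1) :=
      one_div_le_one_div_of_le (by positivity) (by linarith)
    have h6 : 1/((n:ℝ)+1) ≤ 1/((N:ℝ)+1) :=
      one_div_le_one_div_of_le (by positivity) (by linarith)
    have h7 : 2/((N:ℝ)+1) < ε' := by
      rw [div_lt_iff₀ (by positivity)]
      rw [div_lt_iff₀ hε'] at hN
      nlinarith [hε', Nat.cast_nonneg (α := ℝ) N]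
    have h8 : 2/((N:ℝ)+1) = 1/((N:ℝ)+1) + 1/((N:ℝ)+1) := by ring
    linarith
  · rw [atInfFilter, tendsto_comap_iff]
    apply tendsto_atTop_mono hxnorm
    exact tendsto_atTop_add_const_right atTop 1 tendsto_natCast_atTop_atTop

end KobayashiProof

/-- If `∞` is a `k'`-point of an unbounded domain `Ω`, then `Ω` is hyperbolic. -/
theorem hyperbolic_of_kPrime_at_infinity {E : Type*} [NormedAddCommGroup E]
    [NormedSpace ℂ E] [CompleteSpace E] (Ω : Set E) (hΩo : IsOpen Ω) (hΩc : IsConnected Ω)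
    (hub : ¬ Bornology.IsBounded Ω) (hkp : KPrimeAt Ω (atInfFilter E)) :
    IsHyperbolic Ω := by
  refine ⟨?_, ?_, ?_⟩
  · intro z hz w hw hk
    by_contra hne
    have hne' : w ≠ z := fun h => hne h.symm
    have hεpos : 0 < ‖w - z‖ := norm_sub_pos_iff.2 hne'
    exact KobayashiProof.no_degeneracy hΩo hΩc hkp hz hεpos
      (fun δ hδ => ⟨w, hw, by rw [hk]; exact hδ, le_refl _⟩)
  · intro z hz ε hε
    by_contra hcon
    push_neg at hcon
    refine KobayashiProof.no_degeneracy hΩo hΩc hkp hz hε ?_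
    intro δ hδ
    obtain ⟨w, hw, h1, h2⟩ := hcon δ hδ
    exact ⟨w, hw, h1, h2⟩
  · intro z hz ε hε
    exact KobayashiProof.kob_continuity hΩo hz hε
end
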